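/- arXiv:1409.3165 — 4 statements merged into one kernel-verified Lean document; each statement's English description precedes it below -/
import Mathlib

section
/- Let a_n be the number of permutations of length n avoiding the mesh pattern (12, {(0,1),(0,2),(1,0),(2,0)}), and let b_m be the number of permutations of length m with no strong fixed point (with b_0 = 1). Then a_n = b_n + b_{n−1} for all n ≥ 1, and consequently, as formal power series over ℚ, the sum Σ_{n≥1} (a_n/n) x^n equals log(1 + Σ_{m≥1} (m−1)!·x^m); that is, a_n = n·[x^n] log(1 + Σ_{m≥1} (m−1)!·x^m). -/
/-- 1-based position boundaries of an occurrence: `posOf x 0 = 0`,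
`posOf x i = x_i` (1-based) for `1 ≤ i ≤ k`, and `posOf x i = n+1` for `i > k`. -/
def posOf {k n : ℕ} (x : Fin k → Fin n) (i : ℕ) : ℕ :=
  if h : 1 ≤ i ∧ i ≤ k then (x ⟨i - 1, by omega⟩ : ℕ) + 1
  else if i = 0 then 0 else n + 1

/-- 1-based value boundaries of an occurrence: `valOf τ x π 0 = 0`,
`valOf τ x π j = y_j`, the `j`-th smallest of the values `π(x_1),…,π(x_k)`
(which equals `π(x_{τ⁻¹(j)})` for an occurrence of the classical pattern `τ`),
and `n+1` for `j > k`. -/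
def valOf {k n : ℕ} (τ : Equiv.Perm (Fin k)) (x : Fin k → Fin n)
    (π : Equiv.Perm (Fin n)) (j : ℕ) : ℕ :=
  if h : 1 ≤ j ∧ j ≤ k then (π (x (τ.symm ⟨j - 1, by omega⟩)) : ℕ) + 1
  else if j = 0 then 0 else n + 1

/-- `π` (a permutation of length `n`, 0-indexed via `Fin n`) contains the mesh
pattern `(τ, R)`, where boxes in `R` are given with 0-based coordinates in `[0,k]²`.
All positions/values are converted to 1-based via `+1`. -/
def MeshOccursIn {k n : ℕ} (τ : Equiv.Perm (Fin k)) (R : Set (ℕ × ℕ))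
    (π : Equiv.Perm (Fin n)) : Prop :=
  ∃ x : Fin k → Fin n, StrictMono x ∧
    (∀ a b : Fin k, π (x a) < π (x b) ↔ τ a < τ b) ∧
    ∀ r ∈ R, ∀ z : Fin n,
      ¬ (posOf x r.1 < (z : ℕ) + 1 ∧ (z : ℕ) + 1 < posOf x (r.1 + 1) ∧
         valOf τ x π r.2 < (π z : ℕ) + 1 ∧ (π z : ℕ) + 1 < valOf τ x π (r.2 + 1))

/-- `π` avoids the mesh pattern `(τ, R)`. -/
def MeshAvoids {k n : ℕ} (τ : Equiv.Perm (Fin k)) (R : Set (ℕ × ℕ))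
    (π : Equiv.Perm (Fin n)) : Prop := ¬ MeshOccursIn τ R π

/-- `π` has a strong fixed point: an index `i` with `π(i) = i`, `π(j) < i`
for all `j < i` and `π(j) > i` for all `j > i` (0-indexed). -/
def HasStrongFixedPoint {n : ℕ} (π : Equiv.Perm (Fin n)) : Prop :=
  ∃ i : Fin n, π i = i ∧ (∀ j : Fin n, j < i → π j < i) ∧ ∀ j : Fin n, i < j → i < π j

namespace Stmt10Aux
open Equiv Finset

def SFPAt {n : ℕ} (π : Equiv.Perm (Fin n)) (i : Fin n) : Prop :=
  π i = i ∧ (∀ j : Fin n, j < i → π j < i) ∧ ∀ j : Fin n, i < j → i < π j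

variable {n m k : ℕ}

def joinFun (h : n = m + 1 + k) (σ : Equiv.Perm (Fin m)) (τ : Equiv.Perm (Fin k))
    (j : Fin n) : Fin n :=
  if hj : (j : ℕ) < m then ⟨σ ⟨j, hj⟩, by have := (σ ⟨j, hj⟩).isLt; omega⟩
  else if hj2 : (j : ℕ) = m then j
  else ⟨m + 1 + τ ⟨(j : ℕ) - (m + 1), by have := j.isLt; omega⟩,
    by have := (τ ⟨(j : ℕ) - (m + 1), by have := j.isLt; omega⟩).isLt; omega⟩

lemma joinFun_val_lt (h : n = m + 1 + k) (σ : Equiv.Perm (Fin m)) (τ : Equiv.Perm (Fin k))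
    {j : Fin n} (hj : (j : ℕ) < m) : (joinFun h σ τ j : ℕ) = σ ⟨j, hj⟩ := by
  unfold joinFun; rw [dif_pos hj]

lemma joinFun_val_eq (h : n = m + 1 + k) (σ : Equiv.Perm (Fin m)) (τ : Equiv.Perm (Fin k))
    {j : Fin n} (hj : (j : ℕ) = m) : joinFun h σ τ j = j := by
  unfold joinFun; rw [dif_neg (by omega), dif_pos hj]

lemma joinFun_val_gt (h : n = m + 1 + k) (σ : Equiv.Perm (Fin m)) (τ : Equiv.Perm (Fin k))
    {j : Fin n} (hj : m < (j : ℕ)) :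
    (joinFun h σ τ j : ℕ) = m + 1 + τ ⟨(j : ℕ) - (m + 1), by have := j.isLt; omega⟩ := by
  unfold joinFun; rw [dif_neg (by omega), dif_neg (by omega)]

lemma joinFun_leftInverse (h : n = m + 1 + k) (σ : Equiv.Perm (Fin m))
    (τ : Equiv.Perm (Fin k)) :
    Function.LeftInverse (joinFun h σ.symm τ.symm) (joinFun h σ τ) := by
  intro j
  rcases lt_trichotomy (j : ℕ) m with hj | hj | hj
  · apply Fin.ext
    obtain ⟨w, hw⟩ : ∃ w : Fin n, joinFun h σ τ j = w := ⟨_, rfl⟩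
    rw [hw]
    have h1 : (w : ℕ) = σ ⟨j, hj⟩ := hw ▸ joinFun_val_lt h σ τ hj
    have h2 : (w : ℕ) < m := by rw [h1]; exact (σ _).isLt
    rw [joinFun_val_lt h σ.symm τ.symm h2]
    have e1 : (⟨(w : ℕ), h2⟩ : Fin m) = σ ⟨j, hj⟩ := Fin.ext h1
    rw [e1, Equiv.symm_apply_apply]
  · have h1 : joinFun h σ τ j = j := joinFun_val_eq h σ τ hj
    rw [h1, joinFun_val_eq h σ.symm τ.symm hj]
  · apply Fin.ext
    obtain ⟨w, hw⟩ : ∃ w : Fin n, joinFun h σ τ j = w := ⟨_, rfl⟩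
    rw [hw]
    have h1 : (w : ℕ) = m + 1 + τ ⟨(j : ℕ) - (m + 1), by have := j.isLt; omega⟩ :=
      hw ▸ joinFun_val_gt h σ τ hj
    have h2 : m < (w : ℕ) := by omega
    rw [joinFun_val_gt h σ.symm τ.symm h2]
    have e1 : (⟨(w : ℕ) - (m + 1), by have := w.isLt; omega⟩ : Fin k)
        = τ ⟨(j : ℕ) - (m + 1), by have := j.isLt; omega⟩ :=
      Fin.ext (by simp only [Fin.val_mk]; omega)
    rw [e1, Equiv.symm_apply_apply]
    simp only [Fin.val_mk]
    omega

noncomputable def join (h : n = m + 1 + k) (σ : Equiv.Perm (Fin m)) (τ : Equiv.Perm (Fin k)) :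
    Equiv.Perm (Fin n) :=
  Equiv.ofBijective _
    (Finite.injective_iff_bijective.mp (joinFun_leftInverse h σ τ).injective)

lemma join_apply (h : n = m + 1 + k) (σ : Equiv.Perm (Fin m)) (τ : Equiv.Perm (Fin k))
    (j : Fin n) : join h σ τ j = joinFun h σ τ j := rfl

lemma join_SFPAt (h : n = m + 1 + k) (σ : Equiv.Perm (Fin m)) (τ : Equiv.Perm (Fin k))
    (i : Fin n) (hi : (i : ℕ) = m) : SFPAt (join h σ τ) i := by
  refine ⟨?_, ?_, ?_⟩
  · rw [join_apply, joinFun_val_eq h σ τ hi]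
  · intro j hj
    rw [Fin.lt_def] at hj ⊢
    rw [hi] at hj
    rw [join_apply, joinFun_val_lt h σ τ hj, hi]
    exact (σ _).isLt
  · intro j hj
    rw [Fin.lt_def] at hj ⊢
    rw [hi] at hj
    rw [join_apply, joinFun_val_gt h σ τ hj, hi]
    omega

end Stmt10Aux

namespace Stmt10Aux
open Equiv Finset

variable {n m k : ℕ}

lemma exists_SFPAt_lt_join_iff (h : n = m + 1 + k) (σ : Equiv.Perm (Fin m))
    (τ : Equiv.Perm (Fin k)) :
    (∃ j : Fin n, (j : ℕ) < m ∧ SFPAt (join h σ τ) j) ↔ HasStrongFixedPoint σ := by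
  constructor
  · rintro ⟨j, hjm, hfix, hlt, hgt⟩
    refine ⟨⟨(j : ℕ), hjm⟩, ?_, ?_, ?_⟩
    · apply Fin.ext
      have h1 : (join h σ τ j : ℕ) = σ ⟨(j : ℕ), hjm⟩ := joinFun_val_lt h σ τ hjm
      rw [hfix] at h1
      rw [Fin.val_mk, ← h1]
    · intro l hl
      simp only [Fin.lt_def, Fin.val_mk] at hl ⊢
      have hl2 : ((⟨(l : ℕ), by omega⟩ : Fin n) : ℕ) < m := by
        simp only [Fin.val_mk]; exact l.isLt
      have h1 := hlt ⟨(l : ℕ), by omega⟩ (by simp only [Fin.lt_def, Fin.val_mk]; exact hl)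
      rw [Fin.lt_def] at h1
      rw [join_apply, joinFun_val_lt h σ τ hl2] at h1
      simpa using h1
    · intro l hl
      simp only [Fin.lt_def, Fin.val_mk] at hl ⊢
      have hl2 : ((⟨(l : ℕ), by omega⟩ : Fin n) : ℕ) < m := by
        simp only [Fin.val_mk]; exact l.isLt
      have h1 := hgt ⟨(l : ℕ), by omega⟩ (by simp only [Fin.lt_def, Fin.val_mk]; exact hl)
      rw [Fin.lt_def] at h1
      rw [join_apply, joinFun_val_lt h σ τ hl2] at h1
      simpa using h1
  · rintro ⟨a, hfix, hlt, hgt⟩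
    have ham : (a : ℕ) < m := a.isLt
    refine ⟨⟨(a : ℕ), by omega⟩, by simp only [Fin.val_mk]; exact ham, ?_, ?_, ?_⟩
    · apply Fin.ext
      have hcond : ((⟨(a : ℕ), by omega⟩ : Fin n) : ℕ) < m := by
        simp only [Fin.val_mk]; exact ham
      rw [join_apply]
      rw [joinFun_val_lt h σ τ hcond]
      have h4 : (⟨((⟨(a : ℕ), by omega⟩ : Fin n) : ℕ), hcond⟩ : Fin m) = a := Fin.ext (by simp)
      rw [h4]
      simp only [Fin.val_mk]
      exact congrArg Fin.val hfix
    · intro j hj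
      simp only [Fin.lt_def, Fin.val_mk] at hj ⊢
      have hjm : (j : ℕ) < m := by omega
      rw [join_apply, joinFun_val_lt h σ τ hjm]
      have := hlt ⟨(j : ℕ), hjm⟩ (by simp only [Fin.lt_def, Fin.val_mk]; exact hj)
      rw [Fin.lt_def] at this
      simpa using this
    · intro j hj
      simp only [Fin.lt_def, Fin.val_mk] at hj ⊢
      rcases lt_trichotomy ((j : ℕ)) m with hjm | hjm | hjm
      · rw [join_apply, joinFun_val_lt h σ τ hjm]
        have := hgt ⟨(j : ℕ), hjm⟩ (by simp only [Fin.lt_def, Fin.val_mk]; exact hj)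
        rw [Fin.lt_def] at this
        simpa using this
      · rw [join_apply, joinFun_val_eq h σ τ hjm]
        omega
      · rw [join_apply, joinFun_val_gt h σ τ hjm]
        omega

lemma join_surjective (h : n = m + 1 + k) (π : Equiv.Perm (Fin n)) (i : Fin n)
    (hi : (i : ℕ) = m) (hπ : SFPAt π i) :
    ∃ (σ : Equiv.Perm (Fin m)) (τ : Equiv.Perm (Fin k)), join h σ τ = π := by
  obtain ⟨hfix, hlt, hgt⟩ := hπ
  have hlt' : ∀ j : Fin n, (j : ℕ) < m → (π j : ℕ) < m := by
    intro j hjm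
    have h1 := hlt j (by rw [Fin.lt_def, hi]; exact hjm)
    rw [Fin.lt_def, hi] at h1
    exact h1
  have hgt' : ∀ j : Fin n, m < (j : ℕ) → m < (π j : ℕ) := by
    intro j hjm
    have h1 := hgt j (by rw [Fin.lt_def, hi]; exact hjm)
    rw [Fin.lt_def, hi] at h1
    exact h1
  set σf : Fin m → Fin m := fun a => ⟨(π ⟨(a : ℕ), by have := a.isLt; omega⟩ : ℕ),
    hlt' _ (by simp only [Fin.val_mk]; exact a.isLt)⟩ with hσf
  have hσinj : Function.Injective σf := by
    intro a1 a2 hh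
    have hv := congrArg Fin.val hh
    rw [hσf] at hv
    simp only [Fin.val_mk] at hv
    have h2 := π.injective (Fin.ext hv)
    have h3 := congrArg Fin.val h2
    simp only [Fin.val_mk] at h3
    exact Fin.ext h3
  set τf : Fin k → Fin k := fun c => ⟨(π ⟨m + 1 + (c : ℕ), by have := c.isLt; omega⟩ : ℕ) - (m + 1),
    by have h1 := hgt' ⟨m + 1 + (c : ℕ), by have := c.isLt; omega⟩
         (by simp only [Fin.val_mk]; omega)
       have h2 := (π ⟨m + 1 + (c : ℕ), by have := c.isLt; omega⟩).isLt
       omega⟩ with hτf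
  have hτinj : Function.Injective τf := by
    intro c1 c2 hh
    have hv := congrArg Fin.val hh
    rw [hτf] at hv
    simp only [Fin.val_mk] at hv
    have hg1 := hgt' ⟨m + 1 + (c1 : ℕ), by have := c1.isLt; omega⟩
      (by simp only [Fin.val_mk]; omega)
    have hg2 := hgt' ⟨m + 1 + (c2 : ℕ), by have := c2.isLt; omega⟩
      (by simp only [Fin.val_mk]; omega)
    have h2 := π.injective (Fin.ext (show ((π ⟨m + 1 + (c1 : ℕ), _⟩ : Fin n) : ℕ)
      = ((π ⟨m + 1 + (c2 : ℕ), _⟩ : Fin n) : ℕ) by omega))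
    have h3 := congrArg Fin.val h2
    simp only [Fin.val_mk] at h3
    exact Fin.ext (by omega)
  refine ⟨Equiv.ofBijective σf (Finite.injective_iff_bijective.mp hσinj),
    Equiv.ofBijective τf (Finite.injective_iff_bijective.mp hτinj), ?_⟩
  apply Equiv.ext
  intro j
  apply Fin.ext
  rcases lt_trichotomy ((j : ℕ)) m with hj | hj | hj
  · rw [join_apply, joinFun_val_lt h _ _ hj]
    rw [Equiv.ofBijective_apply, hσf]
  · rw [join_apply, joinFun_val_eq h _ _ hj]
    have : j = i := Fin.ext (by omega)
    rw [this, hfix]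
  · rw [join_apply, joinFun_val_gt h _ _ hj]
    rw [Equiv.ofBijective_apply, hτf]
    simp only [Fin.val_mk]
    have e1 : (⟨m + 1 + ((j : ℕ) - (m + 1)), by have := j.isLt; omega⟩ : Fin n) = j :=
      Fin.ext (by simp only [Fin.val_mk]; omega)
    rw [e1]
    have := hgt' j hj
    omega

end Stmt10Aux

namespace Stmt10Aux
open Equiv Finset

variable {n m k : ℕ}

lemma join_apply_lt (h : n = m + 1 + k) (σ : Equiv.Perm (Fin m)) (τ : Equiv.Perm (Fin k))
    (a : Fin m) : (join h σ τ ⟨(a : ℕ), by have := a.isLt; omega⟩ : ℕ) = σ a := by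
  rw [join_apply]
  exact joinFun_val_lt h σ τ a.isLt

lemma join_apply_gt (h : n = m + 1 + k) (σ : Equiv.Perm (Fin m)) (τ : Equiv.Perm (Fin k))
    (c : Fin k) : (join h σ τ ⟨m + 1 + (c : ℕ), by have := c.isLt; omega⟩ : ℕ)
      = m + 1 + τ c := by
  rw [join_apply]
  rw [joinFun_val_gt h σ τ (by simp only [Fin.val_mk]; omega)]
  have key : ∀ x : Fin k, (x : ℕ) = (c : ℕ) → τ x = τ c := fun x hx => congrArg τ (Fin.ext hx)
  rw [key]
  simp only [Fin.val_mk]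
  omega

lemma join_inj (h : n = m + 1 + k) {σ1 σ2 : Equiv.Perm (Fin m)} {τ1 τ2 : Equiv.Perm (Fin k)}
    (hj : join h σ1 τ1 = join h σ2 τ2) : σ1 = σ2 ∧ τ1 = τ2 := by
  constructor
  · apply Equiv.ext; intro a; apply Fin.ext
    rw [← join_apply_lt h σ1 τ1 a, ← join_apply_lt h σ2 τ2 a, hj]
  · apply Equiv.ext; intro c; apply Fin.ext
    have e1 := join_apply_gt h σ1 τ1 c
    have e2 := join_apply_gt h σ2 τ2 c
    rw [hj] at e1
    omega

lemma card_leftmost (h : n = m + 1 + k) (i : Fin n) (hi : (i : ℕ) = m) :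
    Nat.card {π : Equiv.Perm (Fin n) // SFPAt π i ∧ ∀ j : Fin n, (j : ℕ) < m → ¬ SFPAt π j}
      = Nat.card {σ : Equiv.Perm (Fin m) // ¬ HasStrongFixedPoint σ} * Nat.factorial k := by
  have e1 : {p : Equiv.Perm (Fin m) × Equiv.Perm (Fin k) // ¬ HasStrongFixedPoint p.1} ≃
      {π : Equiv.Perm (Fin n) // SFPAt π i ∧ ∀ j : Fin n, (j : ℕ) < m → ¬ SFPAt π j} := by
    apply Equiv.ofBijective (fun p => ⟨join h p.1.1 p.1.2,
      join_SFPAt h _ _ i hi,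
      fun j hj hS => p.2 ((exists_SFPAt_lt_join_iff h _ _).mp ⟨j, hj, hS⟩)⟩)
    constructor
    · rintro ⟨⟨σ1, τ1⟩, h1⟩ ⟨⟨σ2, τ2⟩, h2⟩ hh
      have hjj : join h σ1 τ1 = join h σ2 τ2 := congrArg Subtype.val hh
      obtain ⟨hσ, hτ⟩ := join_inj h hjj
      exact Subtype.ext (Prod.ext hσ hτ)
    · rintro ⟨π, hS, hmin⟩
      obtain ⟨σ, τ, rfl⟩ := join_surjective h π i hi hS
      refine ⟨⟨(σ, τ), ?_⟩, rfl⟩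
      intro hsfp
      obtain ⟨j, hj1, hj2⟩ := (exists_SFPAt_lt_join_iff h σ τ).mpr hsfp
      exact hmin j hj1 hj2
  rw [← Nat.card_congr e1,
    Nat.card_congr (Equiv.prodSubtypeFstEquivSubtypeProd
      (p := fun σ : Equiv.Perm (Fin m) => ¬ HasStrongFixedPoint σ)),
    Nat.card_prod]
  congr 1
  rw [Nat.card_eq_fintype_card, Fintype.card_perm, Fintype.card_fin]

end Stmt10Aux

namespace Stmt10Aux
open Equiv Finset

lemma natCard_filter {α : Type*} [Fintype α] (p : α → Prop) [DecidablePred p] :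
    (univ.filter p).card = Nat.card {x // p x} := by
  rw [Nat.card_eq_fintype_card, Fintype.card_subtype]

lemma count_total (n : ℕ) :
    Nat.factorial n = Nat.card {π : Equiv.Perm (Fin n) // ¬ HasStrongFixedPoint π}
      + ∑ i ∈ Finset.range n,
          Nat.card {σ : Equiv.Perm (Fin i) // ¬ HasStrongFixedPoint σ}
            * Nat.factorial (n - 1 - i) := by
  classical
  have hstep : ∀ t : ℕ, t ≤ n →
      (univ.filter fun π : Equiv.Perm (Fin n) =>
          ∃ j : Fin n, (j : ℕ) < t ∧ SFPAt π j).card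
        = ∑ i ∈ Finset.range t,
            Nat.card {σ : Equiv.Perm (Fin i) // ¬ HasStrongFixedPoint σ}
              * Nat.factorial (n - 1 - i) := by
    intro t
    induction t with
    | zero => intro _; simp
    | succ t ih =>
      intro ht
      have htn : t < n := ht
      have hsplit : (univ.filter fun π : Equiv.Perm (Fin n) =>
            ∃ j : Fin n, (j : ℕ) < t + 1 ∧ SFPAt π j)
          = (univ.filter fun π : Equiv.Perm (Fin n) =>
              ∃ j : Fin n, (j : ℕ) < t ∧ SFPAt π j)
            ∪ (univ.filter fun π : Equiv.Perm (Fin n) =>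
              SFPAt π ⟨t, htn⟩ ∧ ∀ j : Fin n, (j : ℕ) < t → ¬ SFPAt π j) := by
        ext π
        simp only [mem_filter, mem_union, mem_univ, true_and]
        constructor
        · rintro ⟨j, hj, hS⟩
          by_cases hex : ∃ j' : Fin n, (j' : ℕ) < t ∧ SFPAt π j'
          · exact Or.inl hex
          · push_neg at hex
            have hjt : (j : ℕ) = t := by
              rcases Nat.lt_succ_iff_lt_or_eq.mp hj with hj' | hj'
              · exact absurd hS (hex j hj')
              · exact hj'
            right
            refine ⟨?_, hex⟩
            have : j = ⟨t, htn⟩ := Fin.ext (by simp only [Fin.val_mk]; exact hjt)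
            rwa [this] at hS
        · rintro (⟨j, hj, hS⟩ | ⟨hS, hmin⟩)
          · exact ⟨j, by omega, hS⟩
          · exact ⟨⟨t, htn⟩, by simp only [Fin.val_mk]; omega, hS⟩
      have hdisj : Disjoint
          (univ.filter fun π : Equiv.Perm (Fin n) =>
            ∃ j : Fin n, (j : ℕ) < t ∧ SFPAt π j)
          (univ.filter fun π : Equiv.Perm (Fin n) =>
            SFPAt π ⟨t, htn⟩ ∧ ∀ j : Fin n, (j : ℕ) < t → ¬ SFPAt π j) := by
        rw [Finset.disjoint_left]
        intro π hπ hπ'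
        simp only [mem_filter, mem_univ, true_and] at hπ hπ'
        obtain ⟨j, hj, hS⟩ := hπ
        exact hπ'.2 j hj hS
      rw [hsplit, Finset.card_union_of_disjoint hdisj, ih (le_of_lt htn),
        Finset.sum_range_succ]
      congr 1
      rw [natCard_filter]
      exact card_leftmost (show n = t + 1 + (n - 1 - t) by omega) ⟨t, htn⟩
        (by simp only [Fin.val_mk])
  have hall : (univ.filter fun π : Equiv.Perm (Fin n) =>
        ∃ j : Fin n, (j : ℕ) < n ∧ SFPAt π j)
      = univ.filter (fun π : Equiv.Perm (Fin n) => HasStrongFixedPoint π) := by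
    apply filter_congr
    intro π _
    constructor
    · rintro ⟨j, _, hS⟩; exact ⟨j, hS⟩
    · rintro ⟨j, hS⟩; exact ⟨j, j.isLt, hS⟩
  have hpart := Finset.card_filter_add_card_filter_not
    (s := (univ : Finset (Equiv.Perm (Fin n))))
    (p := fun π => HasStrongFixedPoint π)
  rw [card_univ, Fintype.card_perm, Fintype.card_fin] at hpart
  have h1 := hstep n le_rfl
  rw [hall] at h1
  rw [natCard_filter] at hpart
  rw [natCard_filter] at hpart
  rw [natCard_filter] at h1
  omega

end Stmt10Aux

namespace Stmt10Aux
open Equiv Finset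

variable {n : ℕ}

lemma posOf_zero (x : Fin 2 → Fin n) : posOf x 0 = 0 := by
  rw [posOf, dif_neg (by omega), if_pos rfl]

lemma posOf_one (x : Fin 2 → Fin n) : posOf x 1 = (x 0 : ℕ) + 1 := by
  rw [posOf, dif_pos (by omega : 1 ≤ 1 ∧ 1 ≤ 2)]
  norm_num

lemma posOf_two (x : Fin 2 → Fin n) : posOf x 2 = (x 1 : ℕ) + 1 := by
  rw [posOf, dif_pos (by omega : 1 ≤ 2 ∧ 2 ≤ 2)]
  norm_num

lemma posOf_three (x : Fin 2 → Fin n) : posOf x 3 = n + 1 := by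
  rw [posOf, dif_neg (by omega), if_neg (by omega)]

lemma valOf_zero (x : Fin 2 → Fin n) (π : Equiv.Perm (Fin n)) :
    valOf (1 : Equiv.Perm (Fin 2)) x π 0 = 0 := by
  rw [valOf, dif_neg (by omega), if_pos rfl]

lemma valOf_one (x : Fin 2 → Fin n) (π : Equiv.Perm (Fin n)) :
    valOf (1 : Equiv.Perm (Fin 2)) x π 1 = (π (x 0) : ℕ) + 1 := by
  rw [valOf, dif_pos (by omega : 1 ≤ 1 ∧ 1 ≤ 2)]
  norm_num
  rfl

lemma valOf_two (x : Fin 2 → Fin n) (π : Equiv.Perm (Fin n)) :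
    valOf (1 : Equiv.Perm (Fin 2)) x π 2 = (π (x 1) : ℕ) + 1 := by
  rw [valOf, dif_pos (by omega : 1 ≤ 2 ∧ 2 ≤ 2)]
  norm_num
  rfl

lemma valOf_three (x : Fin 2 → Fin n) (π : Equiv.Perm (Fin n)) :
    valOf (1 : Equiv.Perm (Fin 2)) x π 3 = n + 1 := by
  rw [valOf, dif_neg (by omega), if_neg (by omega)]

lemma mesh_iff (π : Equiv.Perm (Fin n)) :
    MeshOccursIn (1 : Equiv.Perm (Fin 2)) {(0,1),(0,2),(1,0),(2,0)} π
      ↔ ∃ i : Fin n, SFPAt π i ∧ (i : ℕ) + 1 < n := by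
  constructor
  · rintro ⟨x, hmono, hord, hbox⟩
    have h01 : x 0 < x 1 := hmono (by decide)
    have hord01 : π (x 0) < π (x 1) := (hord 0 1).mpr (by decide)
    have B1 := fun z => hbox (0,1) (by simp) z
    have B2 := fun z => hbox (0,2) (by simp) z
    have B3 := fun z => hbox (1,0) (by simp) z
    have B4 := fun z => hbox (2,0) (by simp) z
    simp only [zero_add, Nat.reduceAdd, posOf_zero, posOf_one, posOf_two, posOf_three,
      valOf_zero, valOf_one, valOf_two, valOf_three] at B1 B2 B3 B4
    have hne0 : ∀ z : Fin n, z ≠ x 0 → (π z : ℕ) ≠ (π (x 0) : ℕ) :=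
      fun z hz h => hz (π.injective (Fin.ext h))
    have hne1 : ∀ z : Fin n, z ≠ x 1 → (π z : ℕ) ≠ (π (x 1) : ℕ) :=
      fun z hz h => hz (π.injective (Fin.ext h))
    have h01v : (x 0 : ℕ) < (x 1 : ℕ) := h01
    have hord01v : (π (x 0) : ℕ) < (π (x 1) : ℕ) := hord01
    have hlt : ∀ z : Fin n, z < x 0 → π z < π (x 0) := by
      intro z hz
      rw [Fin.lt_def] at hz ⊢
      have hne0' := hne0 z (by intro h; rw [h] at hz; omega)
      have hne1' := hne1 z (by intro h; rw [h] at hz; omega)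
      have b1 := B1 z
      have b2 := B2 z
      omega
    have hgt : ∀ z : Fin n, x 0 < z → π (x 0) < π z := by
      intro z hz
      rw [Fin.lt_def] at hz ⊢
      rcases eq_or_ne z (x 1) with rfl | hzx1
      · omega
      have hne0' := hne0 z (by intro h; rw [h] at hz; omega)
      have hne1' := hne1 z hzx1
      have b3 := B3 z
      have b4 := B4 z
      have hz1 : (z : ℕ) ≠ (x 1 : ℕ) := fun h => hzx1 (Fin.ext h)
      omega
    have hiio : Finset.image π (Finset.Iio (x 0)) = Finset.Iio (π (x 0)) := by
      ext v
      simp only [Finset.mem_image, Finset.mem_Iio]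
      constructor
      · rintro ⟨z, hz, rfl⟩
        exact hlt z hz
      · intro hv
        refine ⟨π.symm v, ?_, π.apply_symm_apply v⟩
        by_contra hc
        push_neg at hc
        rcases eq_or_lt_of_le hc with hc | hc
        · have h2 : π (x 0) = v := by rw [hc, π.apply_symm_apply]
          rw [h2] at hv
          exact absurd hv (lt_irrefl v)
        · have h2 := hgt _ hc
          rw [π.apply_symm_apply] at h2
          exact absurd hv (not_lt.mpr h2.le)
    have hcard := congrArg Finset.card hiio
    rw [Finset.card_image_of_injective _ π.injective, Fin.card_Iio, Fin.card_Iio] at hcard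
    have hfix : π (x 0) = x 0 := Fin.ext hcard.symm
    refine ⟨x 0, ⟨hfix, fun j hj => by rw [← hfix]; exact hlt j hj,
      fun j hj => by rw [← hfix]; exact hgt j hj⟩, ?_⟩
    have := (x 1).isLt
    omega
  · rintro ⟨i, ⟨hfix, hlt, hgt⟩, hi1⟩
    set x : Fin 2 → Fin n := fun a => if a = 0 then i else ⟨(i : ℕ) + 1, hi1⟩ with hx
    have hx0 : x 0 = i := by rw [hx]; norm_num
    have hx1 : x 1 = ⟨(i : ℕ) + 1, hi1⟩ := by rw [hx]; norm_num
    have hπx0 : π (x 0) = i := by rw [hx0, hfix]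
    have hπx1 : i < π (x 1) := by
      rw [hx1]
      exact hgt _ (by simp only [Fin.lt_def, Fin.val_mk]; omega)
    have hπx0v : (π (x 0) : ℕ) = (i : ℕ) := congrArg Fin.val hπx0
    have hπx1v : (i : ℕ) < (π (x 1) : ℕ) := hπx1
    have hx0v : (x 0 : ℕ) = (i : ℕ) := congrArg Fin.val hx0
    have hx1v : (x 1 : ℕ) = (i : ℕ) + 1 := by rw [hx1]
    have hzlt : ∀ z : Fin n, (z : ℕ) < (i : ℕ) → (π z : ℕ) < (i : ℕ) := by
      intro z hz
      have := hlt z (by rwa [Fin.lt_def])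
      rwa [Fin.lt_def] at this
    have hzgt : ∀ z : Fin n, (i : ℕ) < (z : ℕ) → (i : ℕ) < (π z : ℕ) := by
      intro z hz
      have := hgt z (by rwa [Fin.lt_def])
      rwa [Fin.lt_def] at this
    refine ⟨x, ?_, ?_, ?_⟩
    · intro a b hab
      rw [Fin.lt_def] at hab
      have ha2 := a.isLt
      have hb2 := b.isLt
      have ha0 : a = 0 := Fin.ext (by omega)
      have hb1 : b = 1 := Fin.ext (by omega)
      rw [ha0, hb1, hx0, hx1]
      simp only [Fin.lt_def, Fin.val_mk]
      omega
    · intro a b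
      simp only [Equiv.Perm.coe_one, id_eq]
      have ha01 : a = 0 ∨ a = 1 := by
        have := a.isLt
        by_cases hav : (a : ℕ) = 0
        · exact Or.inl (Fin.ext (by simpa using hav))
        · exact Or.inr (Fin.ext (by simp; omega))
      have hb01 : b = 0 ∨ b = 1 := by
        have := b.isLt
        by_cases hbv : (b : ℕ) = 0
        · exact Or.inl (Fin.ext (by simpa using hbv))
        · exact Or.inr (Fin.ext (by simp; omega))
      rcases ha01 with rfl | rfl <;> rcases hb01 with rfl | rfl
      · exact iff_of_false (lt_irrefl _) (lt_irrefl _)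
      · refine iff_of_true ?_ (by decide)
        rw [Fin.lt_def]
        omega
      · refine iff_of_false ?_ (by decide)
        rw [not_lt, Fin.le_def]
        omega
      · exact iff_of_false (lt_irrefl _) (lt_irrefl _)
    · intro r hr z
      simp only [Set.mem_insert_iff, Set.mem_singleton_iff] at hr
      rcases hr with rfl | rfl | rfl | rfl <;>
        simp only [zero_add, Nat.reduceAdd, posOf_zero, posOf_one, posOf_two, posOf_three,
          valOf_zero, valOf_one, valOf_two, valOf_three] <;>
        rintro ⟨c1, c2, c3, c4⟩
      · have := hzlt z (by omega)
        omega
      · have := hzlt z (by omega)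
        omega
      · have := hzgt z (by omega)
        omega
      · have := hzgt z (by omega)
        omega

end Stmt10Aux

namespace Stmt10Aux
open Equiv Finset

lemma count_avoid (N : ℕ) :
    Nat.card {π : Equiv.Perm (Fin (N+1)) //
        MeshAvoids (1 : Equiv.Perm (Fin 2)) {(0,1),(0,2),(1,0),(2,0)} π}
      = Nat.card {π : Equiv.Perm (Fin (N+1)) // ¬ HasStrongFixedPoint π}
        + Nat.card {σ : Equiv.Perm (Fin N) // ¬ HasStrongFixedPoint σ} := by
  classical
  have havoid : ∀ π : Equiv.Perm (Fin (N+1)),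
      MeshAvoids (1 : Equiv.Perm (Fin 2)) {(0,1),(0,2),(1,0),(2,0)} π
        ↔ ∀ i : Fin (N+1), SFPAt π i → (i : ℕ) = N := by
    intro π
    rw [MeshAvoids, mesh_iff]
    constructor
    · intro h i hS
      by_contra hne
      exact h ⟨i, hS, by have := i.isLt; omega⟩
    · rintro h ⟨i, hS, hlt⟩
      have := h i hS
      omega
  have hsplit : (univ.filter fun π : Equiv.Perm (Fin (N+1)) =>
        MeshAvoids (1 : Equiv.Perm (Fin 2)) {(0,1),(0,2),(1,0),(2,0)} π)
      = (univ.filter fun π : Equiv.Perm (Fin (N+1)) => ¬ HasStrongFixedPoint π)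
        ∪ (univ.filter fun π : Equiv.Perm (Fin (N+1)) =>
            SFPAt π ⟨N, by omega⟩ ∧ ∀ j : Fin (N+1), (j : ℕ) < N → ¬ SFPAt π j) := by
    ext π
    simp only [mem_filter, mem_union, mem_univ, true_and]
    rw [havoid π]
    constructor
    · intro h
      by_cases hex : HasStrongFixedPoint π
      · right
        obtain ⟨i, hS⟩ := hex
        have hiN : (i : ℕ) = N := h i hS
        have hieq : i = ⟨N, by omega⟩ := Fin.ext (by simpa using hiN)
        refine ⟨by rwa [hieq] at hS, ?_⟩
        intro j hj hSj
        have := h j hSj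
        omega
      · exact Or.inl hex
    · rintro (hno | ⟨hS, hmin⟩)
      · intro i hS
        exact absurd ⟨i, hS⟩ hno
      · intro i hSi
        by_contra hne
        have hiN : (i : ℕ) < N := by have := i.isLt; omega
        exact hmin i hiN hSi
  have hdisj : Disjoint
      (univ.filter fun π : Equiv.Perm (Fin (N+1)) => ¬ HasStrongFixedPoint π)
      (univ.filter fun π : Equiv.Perm (Fin (N+1)) =>
        SFPAt π ⟨N, by omega⟩ ∧ ∀ j : Fin (N+1), (j : ℕ) < N → ¬ SFPAt π j) := by
    rw [Finset.disjoint_left]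
    intro π h1 h2
    simp only [mem_filter, mem_univ, true_and] at h1 h2
    exact h1 ⟨⟨N, by omega⟩, h2.1⟩
  rw [← natCard_filter, hsplit, Finset.card_union_of_disjoint hdisj,
    natCard_filter, natCard_filter]
  congr 1
  rw [card_leftmost (show N + 1 = N + 1 + 0 by omega) ⟨N, by omega⟩ (by simp only [Fin.val_mk])]
  simp [Nat.factorial]

lemma card_noSFP_zero :
    Nat.card {π : Equiv.Perm (Fin 0) // ¬ HasStrongFixedPoint π} = 1 := by
  have hall : ∀ π : Equiv.Perm (Fin 0), ¬ HasStrongFixedPoint π := by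
    rintro π ⟨i, _⟩
    exact i.elim0
  rw [Nat.card_congr (Equiv.subtypeUnivEquiv hall), Nat.card_eq_fintype_card,
    Fintype.card_perm, Fintype.card_fin]
  rfl

end Stmt10Aux


/-- With `a n` the number of permutations of length `n` avoiding
`(12, {(0,1),(0,2),(1,0),(2,0)})` and `b m` the number of permutations of length
`m` without strong fixed points, `a n = b n + b (n-1)` for `n ≥ 1`; moreover
`L = Σ_{n≥1} (a_n/n) xⁿ` equals `log(1 + Σ_{m≥1} (m-1)!·x^m)` as formal power
series over `ℚ` (encoded by the unique characterization of the formal logarithm: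
`L` has constant term `0` and `(1+G)·L' = G'` where `G = Σ_{m≥1} (m-1)!·x^m`);
equivalently `a n = n·[xⁿ] log(1+G)`. -/
theorem stmt10 (a b : ℕ → ℕ)
    (ha : ∀ n, a n = Nat.card {π : Equiv.Perm (Fin n) //
      MeshAvoids (1 : Equiv.Perm (Fin 2)) {(0,1),(0,2),(1,0),(2,0)} π})
    (hb : ∀ m, b m = Nat.card {π : Equiv.Perm (Fin m) // ¬ HasStrongFixedPoint π}) :
    (∀ n, 1 ≤ n → a n = b n + b (n - 1)) ∧
    PowerSeries.constantCoeff (PowerSeries.mk fun n => (a n : ℚ) / n) = 0 ∧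
    (1 + PowerSeries.mk fun m => if m = 0 then (0 : ℚ) else ((m - 1).factorial : ℚ)) *
        PowerSeries.derivative ℚ (PowerSeries.mk fun n => (a n : ℚ) / n) =
      PowerSeries.derivative ℚ
        (PowerSeries.mk fun m => if m = 0 then (0 : ℚ) else ((m - 1).factorial : ℚ)) := by
  have part1 : ∀ n, 1 ≤ n → a n = b n + b (n - 1) := by
    intro n hn
    obtain ⟨N, rfl⟩ : ∃ N, n = N + 1 := ⟨n - 1, by omega⟩
    rw [ha, hb, hb, Nat.add_sub_cancel]
    exact Stmt10Aux.count_avoid N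
  have hb0 : b 0 = 1 := by rw [hb]; exact Stmt10Aux.card_noSFP_zero
  have hBfact : ∀ n : ℕ, Nat.factorial n
      = b n + ∑ i ∈ Finset.range n, b i * Nat.factorial (n - 1 - i) := by
    intro n
    simp only [hb]
    exact Stmt10Aux.count_total n
  have keyN : ∀ n : ℕ, a (n+1) + ∑ q ∈ Finset.range n, Nat.factorial q * a (n - q)
      = Nat.factorial (n+1) := by
    intro n
    have hB1 := hBfact (n+1)
    have hB0 := hBfact n
    have hr1 : ∑ i ∈ Finset.range (n+1), b i * Nat.factorial (n + 1 - 1 - i)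
        = (∑ q ∈ Finset.range n, b (n - q) * Nat.factorial q) + b 0 * Nat.factorial n := by
      rw [← Finset.sum_range_reflect (fun i => b i * Nat.factorial (n + 1 - 1 - i)) (n+1),
        Finset.sum_range_succ]
      congr 1
      · apply Finset.sum_congr rfl
        intro q hq
        rw [Finset.mem_range] at hq
        rw [show n + 1 - 1 - q = n - q from by omega,
          show n + 1 - 1 - (n - q) = q from by omega]
      · rw [show n + 1 - 1 - n = 0 from by omega, show n + 1 - 1 - 0 = n from by omega]
    have hr0 : ∑ i ∈ Finset.range n, b i * Nat.factorial (n - 1 - i)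
        = ∑ q ∈ Finset.range n, b (n - 1 - q) * Nat.factorial q := by
      rw [← Finset.sum_range_reflect (fun i => b i * Nat.factorial (n - 1 - i)) n]
      apply Finset.sum_congr rfl
      intro q hq
      rw [Finset.mem_range] at hq
      rw [show n - 1 - (n - 1 - q) = q from by omega]
    have hsa : ∑ q ∈ Finset.range n, Nat.factorial q * a (n - q)
        = (∑ q ∈ Finset.range n, b (n - q) * Nat.factorial q)
          + ∑ q ∈ Finset.range n, b (n - 1 - q) * Nat.factorial q := by
      rw [← Finset.sum_add_distrib]
      apply Finset.sum_congr rfl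
      intro q hq
      rw [Finset.mem_range] at hq
      rw [part1 (n - q) (by omega), show n - q - 1 = n - 1 - q from by omega]
      ring
    have hpa := part1 (n+1) (by omega)
    rw [Nat.add_sub_cancel] at hpa
    rw [hr1] at hB1
    rw [hr0] at hB0
    rw [hsa, hpa]
    rw [hb0] at hB1
    omega
  refine ⟨part1, ?_, ?_⟩
  · rw [PowerSeries.constantCoeff_mk]
    simp
  · ext n
    rw [PowerSeries.coeff_mul, PowerSeries.coeff_derivative, PowerSeries.coeff_mk,
      if_neg (Nat.succ_ne_zero n),
      Finset.Nat.sum_antidiagonal_eq_sum_range_succ_mk, Finset.sum_range_succ']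
    have hcoeff1G : ∀ p : ℕ, (PowerSeries.coeff p)
        (1 + PowerSeries.mk fun m => if m = 0 then (0 : ℚ) else ((m - 1).factorial : ℚ))
        = if p = 0 then 1 else (((p - 1).factorial : ℕ) : ℚ) := by
      intro p
      rw [map_add, PowerSeries.coeff_one, PowerSeries.coeff_mk]
      split_ifs <;> simp
    have hcoeffL : ∀ q : ℕ, (PowerSeries.coeff q)
        (PowerSeries.derivative ℚ (PowerSeries.mk fun i => (a i : ℚ) / i))
        = (a (q+1) : ℚ) := by
      intro q
      rw [PowerSeries.coeff_derivative, PowerSeries.coeff_mk]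
      push_cast
      rw [div_mul_cancel₀]
      exact Nat.cast_add_one_ne_zero q
    simp only [hcoeff1G, hcoeffL, Nat.succ_ne_zero, if_false, if_pos rfl,
      Nat.add_sub_cancel, Nat.sub_zero, one_mul]
    have hsum : ∑ k ∈ Finset.range n,
        (((k : ℕ).factorial : ℚ)) * (a (n - (k+1) + 1) : ℚ)
          = ∑ k ∈ Finset.range n, (((k : ℕ).factorial : ℚ)) * (a (n - k) : ℚ) := by
      apply Finset.sum_congr rfl
      intro q hq
      rw [Finset.mem_range] at hq
      rw [show n - (q + 1) + 1 = n - q from by omega]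
    rw [hsum]
    have key' := keyN n
    rw [Nat.factorial_succ] at key'
    have keyQ : ((a (n+1) : ℚ) + ∑ q ∈ Finset.range n,
        ((q.factorial : ℕ) : ℚ) * (a (n - q) : ℚ)) = ((n+1 : ℕ) : ℚ) * ((n.factorial : ℕ) : ℚ) := by
      exact_mod_cast congrArg (fun t : ℕ => (t : ℚ)) key'
    push_cast at keyQ ⊢
    linarith [keyQ]
end

section
/- Let p be the mesh pattern (12, {(0,0),(0,1),(0,2),(1,2),(2,0),(2,2)}). For every n ≥ 2 and every 1 ≤ i ≤ n−1, the number of permutations π of length n with π(n+1−i) = n (i.e. with the letter n in the i-th position counted from the right) that contain p equals (n−1)!/i. Consequently, the number of permutations of length n avoiding p is n! − Σ_{i=1}^{n−1} (n−1)!/i. -/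
lemma posOf_0 {n : ℕ} (x : Fin 2 → Fin n) : posOf x 0 = 0 := rfl
lemma posOf_1 {n : ℕ} (x : Fin 2 → Fin n) : posOf x 1 = (x 0 : ℕ) + 1 := rfl
lemma posOf_2 {n : ℕ} (x : Fin 2 → Fin n) : posOf x 2 = (x 1 : ℕ) + 1 := rfl
lemma posOf_3 {n : ℕ} (x : Fin 2 → Fin n) : posOf x 3 = n + 1 := rfl
lemma valOf_0 {n : ℕ} (x : Fin 2 → Fin n) (π : Equiv.Perm (Fin n)) :
    valOf (1 : Equiv.Perm (Fin 2)) x π 0 = 0 := rfl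
lemma valOf_1 {n : ℕ} (x : Fin 2 → Fin n) (π : Equiv.Perm (Fin n)) :
    valOf (1 : Equiv.Perm (Fin 2)) x π 1 = (π (x 0) : ℕ) + 1 := rfl
lemma valOf_2 {n : ℕ} (x : Fin 2 → Fin n) (π : Equiv.Perm (Fin n)) :
    valOf (1 : Equiv.Perm (Fin 2)) x π 2 = (π (x 1) : ℕ) + 1 := rfl
lemma valOf_3 {n : ℕ} (x : Fin 2 → Fin n) (π : Equiv.Perm (Fin n)) :
    valOf (1 : Equiv.Perm (Fin 2)) x π 3 = n + 1 := rfl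

lemma mesh_char {n : ℕ} (hn : 2 ≤ n) (π : Equiv.Perm (Fin n)) :
    MeshOccursIn (1 : Equiv.Perm (Fin 2)) {(0,0),(0,1),(0,2),(1,2),(2,0),(2,2)} π ↔
      ((π ⟨0, by omega⟩ : ℕ) ≠ n - 1 ∧
        ∀ z : Fin n, π.symm ⟨n-1, by omega⟩ < z → π ⟨0, by omega⟩ < π z) := by
  have hn0 : 0 < n := by omega
  set z0 : Fin n := ⟨0, by omega⟩ with hz0
  set top : Fin n := ⟨n-1, by omega⟩ with htopdef
  have htop : ∀ w : Fin n, (w : ℕ) ≤ n - 1 := fun w => by have := w.isLt; omega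
  have hz0v : (z0 : ℕ) = 0 := rfl
  have htopv : (top : ℕ) = n - 1 := rfl
  constructor
  · rintro ⟨x, hm, hord, hbox⟩
    have hab : (x 0 : ℕ) < x 1 := hm (by decide)
    have hπ : (π (x 0) : ℕ) < π (x 1) := (hord 0 1).2 (by decide)
    have h00 := fun z => hbox (0,0) (by simp) z
    have h01 := fun z => hbox (0,1) (by simp) z
    have h02 := fun z => hbox (0,2) (by simp) z
    have h12 := fun z => hbox (1,2) (by simp) z
    have h20 := fun z => hbox (2,0) (by simp) z
    have h22 := fun z => hbox (2,2) (by simp) z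
    simp only [show (0+1 : ℕ) = 1 from rfl, show (1+1 : ℕ) = 2 from rfl,
      show (2+1 : ℕ) = 3 from rfl, posOf_0, posOf_1, posOf_2, posOf_3,
      valOf_0, valOf_1, valOf_2, valOf_3] at h00 h01 h02 h12 h20 h22
    have hx0 : (x 0 : ℕ) = 0 := by
      by_contra h
      have hiz : (π z0 : ℕ) ≠ π (x 0) := by
        intro he
        have h2 : ((z0 : Fin n) : ℕ) = x 0 :=
          congrArg Fin.val (π.injective (Fin.val_injective he))
        omega
      have hiz1 : (π z0 : ℕ) ≠ π (x 1) := by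
        intro he
        have h2 : ((z0 : Fin n) : ℕ) = x 1 :=
          congrArg Fin.val (π.injective (Fin.val_injective he))
        omega
      rcases Nat.lt_trichotomy (π z0 : ℕ) (π (x 0) : ℕ) with hc | hc | hc
      · exact h00 z0 (by omega)
      · exact hiz hc
      · rcases Nat.lt_trichotomy (π z0 : ℕ) (π (x 1) : ℕ) with hd | hd | hd
        · exact h01 z0 (by omega)
        · exact hiz1 hd
        · exact h02 z0 (by have := (π z0).isLt; omega)
    have hxz0 : x 0 = z0 := Fin.val_injective (by omega)
    have hmax : ∀ z : Fin n, (π z : ℕ) ≤ π (x 1) := by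
      intro z
      by_contra hgt
      push_neg at hgt
      have hz1 : (z : ℕ) ≠ x 1 := fun he => by
        rw [Fin.val_injective he] at hgt; omega
      have hz0' : (z : ℕ) ≠ 0 := by
        intro he
        have : z = x 0 := Fin.val_injective (by rw [he, hx0])
        rw [this] at hgt; omega
      have hπz := (π z).isLt
      rcases Nat.lt_trichotomy (z : ℕ) (x 1 : ℕ) with hc | hc | hc
      · exact h12 z (by omega)
      · exact hz1 hc
      · exact h22 z (by omega)
    have hbtop : (π (x 1) : ℕ) = n - 1 := by
      have h1 := hmax (π.symm top)
      rw [π.apply_symm_apply] at h1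
      have h2 := htop (π (x 1))
      omega
    have hsymm : π.symm top = x 1 := by
      have : π (x 1) = top := Fin.val_injective (by rw [hbtop, htopv])
      rw [← this, π.symm_apply_apply]
    refine ⟨by rw [hxz0] at hπ; omega, ?_⟩
    intro z hz
    rw [hsymm] at hz
    have hzx : (x 1 : ℕ) < z := hz
    have hne : (π z : ℕ) ≠ π (x 0) := by
      intro he
      have h2 : (z : ℕ) = (x 0 : ℕ) :=
        congrArg Fin.val (π.injective (Fin.val_injective he))
      omega
    have hge : ¬ ((π z : ℕ) < π (x 0)) := fun hlt =>
      h20 z (by have := z.isLt; omega)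
    rw [hxz0] at hne hge
    exact Fin.lt_def.mpr (by omega)
  · rintro ⟨h0, hall⟩
    set b : Fin n := π.symm top with hbdef
    have hb : π b = top := π.apply_symm_apply top
    have hbv : (π b : ℕ) = n - 1 := congrArg Fin.val hb
    have hb0 : (b : ℕ) ≠ 0 := by
      intro he
      have hbz : b = z0 := Fin.val_injective (by rw [he, hz0v])
      rw [hbz] at hbv
      exact h0 hbv
    have hπ0 : (π z0 : ℕ) < n - 1 := lt_of_le_of_ne (htop _) h0
    refine ⟨![z0, b], ?_, ?_, ?_⟩
    · intro u v huv
      fin_cases u <;> fin_cases v <;>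
        first
          | exact absurd huv (by decide)
          | (show z0 < b; exact Fin.lt_def.mpr (by omega))
    · intro u v
      fin_cases u <;> fin_cases v <;>
        simp only [Fin.mk_zero, Fin.mk_one, Matrix.cons_val_zero, Matrix.cons_val_one,
          Matrix.head_cons, Equiv.Perm.coe_one, id_eq, lt_self_iff_false]
      · constructor
        · intro _; decide
        · intro _; exact Fin.lt_def.mpr (by omega)
      · constructor
        · intro h
          have := Fin.lt_def.mp h
          omega
        · intro h; exact absurd h (by decide)
    · rintro r hr z
      simp only [Set.mem_insert_iff, Set.mem_singleton_iff] at hr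
      have hπz := (π z).isLt
      have hzlt := z.isLt
      rcases hr with rfl | rfl | rfl | rfl | rfl | rfl <;>
        simp only [show (0+1 : ℕ) = 1 from rfl, show (1+1 : ℕ) = 2 from rfl,
          show (2+1 : ℕ) = 3 from rfl, posOf_0, posOf_1, posOf_2, posOf_3,
          valOf_0, valOf_1, valOf_2, valOf_3,
          Matrix.cons_val_zero, Matrix.cons_val_one, Matrix.head_cons]
      · rintro ⟨-, h2, -, -⟩; omega
      · rintro ⟨-, h2, -, -⟩; omega
      · rintro ⟨-, h2, -, -⟩; omega
      · rintro ⟨-, -, h3, -⟩; omega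
      · rintro ⟨h1, -, -, h4⟩
        have hlt : b < z := Fin.lt_def.mpr (by omega)
        have hc : (π z0 : ℕ) < π z := Fin.lt_def.mp (hall z hlt)
        omega
      · rintro ⟨-, -, h3, -⟩; omega
open Finset in
lemma card_fiber {n : ℕ} (hn : 1 ≤ n) (p t : Fin n) :
    (univ.filter (fun π : Equiv.Perm (Fin n) => π p = t)).card = (n-1).factorial := by
  classical
  have key : ∀ t1 t2 : Fin n,
      (univ.filter (fun π : Equiv.Perm (Fin n) => π p = t1)).card =
      (univ.filter (fun π : Equiv.Perm (Fin n) => π p = t2)).card := by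
    intro t1 t2
    apply Finset.card_nbij' (fun π => Equiv.swap t1 t2 * π) (fun π => Equiv.swap t1 t2 * π)
    · intro π hπ
      simp only [mem_coe, mem_filter, mem_univ, true_and] at hπ ⊢
      rw [Equiv.Perm.mul_apply, hπ, Equiv.swap_apply_left]
    · intro π hπ
      simp only [mem_coe, mem_filter, mem_univ, true_and] at hπ ⊢
      rw [Equiv.Perm.mul_apply, hπ, Equiv.swap_apply_right]
    · intro π _; dsimp only; rw [← mul_assoc, Equiv.swap_mul_self, one_mul]
    · intro π _; dsimp only; rw [← mul_assoc, Equiv.swap_mul_self, one_mul]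
  have hsum : (univ : Finset (Equiv.Perm (Fin n))).card =
      ∑ t2 : Fin n, (univ.filter (fun π : Equiv.Perm (Fin n) => π p = t2)).card :=
    Finset.card_eq_sum_card_fiberwise (fun x _ => mem_univ _)
  rw [Finset.card_univ, Fintype.card_perm, Fintype.card_fin,
    Finset.sum_congr rfl (fun t2 _ => key t2 t), Finset.sum_const, Finset.card_univ,
    Fintype.card_fin, smul_eq_mul] at hsum
  have hfac : n.factorial = n * (n-1).factorial := by
    obtain ⟨m, rfl⟩ : ∃ m, n = m + 1 := ⟨n - 1, by omega⟩
    simp [Nat.factorial_succ]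
  exact (Nat.eq_of_mul_eq_mul_left (by omega) (hsum.symm.trans hfac))

open Finset in
lemma count_main {n : ℕ} (hn : 2 ≤ n) (p : Fin n) (hp : (p : ℕ) ≠ 0) :
    (univ.filter (fun π : Equiv.Perm (Fin n) =>
      π p = ⟨n-1, by omega⟩ ∧ ∀ z : Fin n, p < z → π ⟨0, by omega⟩ < π z)).card
      = (n-1).factorial / (n - (p : ℕ)) := by
  classical
  have hn0 : 0 < n := by omega
  set z0 : Fin n := ⟨0, by omega⟩ with hz0
  set top : Fin n := ⟨n-1, by omega⟩ with htopdef
  have hz0v : (z0 : ℕ) = 0 := rfl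
  set T : Finset (Fin n) := insert z0 (univ.filter (fun z => p < z)) with hT
  have hz0T : z0 ∈ T := mem_insert_self _ _
  have hz0nf : z0 ∉ univ.filter (fun z : Fin n => p < z) := by
    simp only [mem_filter, mem_univ, true_and]
    intro h
    exact absurd (Fin.lt_def.mp h) (by omega)
  have hTcard : T.card = n - (p : ℕ) := by
    rw [hT, card_insert_of_notMem hz0nf]
    have he : (univ.filter (fun z : Fin n => p < z)) = Finset.Ioi p := by
      ext z; simp [Finset.mem_Ioi]
    rw [he, Fin.card_Ioi]
    have := p.isLt; omega
  have hpz0 : p ≠ z0 := fun h => hp (by rw [h])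
  have hpT : p ∉ T := by
    rw [hT]
    simp only [mem_insert, mem_filter, mem_univ, true_and]
    rintro (h | h)
    · exact hpz0 h
    · exact absurd h (lt_irrefl _)
  set C : Fin n → Finset (Equiv.Perm (Fin n)) := fun t =>
    univ.filter (fun π => π p = top ∧ ∀ z ∈ T, z ≠ t → π t < π z) with hC
  have htarget : (univ.filter (fun π : Equiv.Perm (Fin n) =>
      π p = top ∧ ∀ z : Fin n, p < z → π z0 < π z)) = C z0 := by
    ext π
    simp only [hC, mem_filter, mem_univ, true_and, hT, mem_insert]
    constructor
    · rintro ⟨h1, h2⟩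
      refine ⟨h1, ?_⟩
      rintro z (rfl | hz) hne
      · exact absurd rfl hne
      · exact h2 z (by simpa using hz)
    · rintro ⟨h1, h2⟩
      refine ⟨h1, fun z hz => ?_⟩
      have hzne : z ≠ z0 := by
        intro h; rw [h] at hz
        exact absurd (Fin.lt_def.mp hz) (by omega)
      exact h2 z (Or.inr (by simpa using hz)) hzne
  have hB : (univ.filter (fun π : Equiv.Perm (Fin n) => π p = top)) = T.biUnion C := by
    ext π
    simp only [mem_filter, mem_univ, true_and, mem_biUnion, hC]
    constructor
    · intro h1
      obtain ⟨t, htT, hmin⟩ := T.exists_min_image π ⟨z0, hz0T⟩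
      exact ⟨t, htT, h1, fun z hz hne =>
        lt_of_le_of_ne (hmin z hz) (fun he => hne (π.injective he).symm)⟩
    · rintro ⟨t, _, h1, _⟩; exact h1
  have hdisj : ∀ t1 ∈ T, ∀ t2 ∈ T, t1 ≠ t2 → Disjoint (C t1) (C t2) := by
    intro t1 ht1 t2 ht2 hne
    rw [Finset.disjoint_left]
    intro π h1 h2
    simp only [hC, mem_filter] at h1 h2
    exact absurd ((h1.2.2 t2 ht2 (Ne.symm hne)).trans (h2.2.2 t1 ht1 hne)) (lt_irrefl _)
  have hCcard : ∀ t ∈ T, (C t).card = (C z0).card := by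
    intro t htT
    have hpt : p ≠ t := fun h => hpT (h ▸ htT)
    have hsp : Equiv.swap z0 t p = p := Equiv.swap_apply_of_ne_of_ne hpz0 hpt
    have hsT : ∀ z ∈ T, Equiv.swap z0 t z ∈ T := by
      intro z hz
      rcases eq_or_ne z z0 with rfl | h1
      · rw [Equiv.swap_apply_left]; exact htT
      rcases eq_or_ne z t with rfl | h2
      · rw [Equiv.swap_apply_right]; exact hz0T
      · rw [Equiv.swap_apply_of_ne_of_ne h1 h2]; exact hz
    apply Finset.card_nbij' (fun π => π * Equiv.swap z0 t) (fun π => π * Equiv.swap z0 t)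
    · intro π hπ
      simp only [mem_coe, hC, mem_filter, mem_univ, true_and] at hπ ⊢
      obtain ⟨h1, h2⟩ := hπ
      refine ⟨by rw [Equiv.Perm.mul_apply, hsp]; exact h1, ?_⟩
      intro z hz hne
      rw [Equiv.Perm.mul_apply, Equiv.Perm.mul_apply, Equiv.swap_apply_left]
      refine h2 _ (hsT z hz) ?_
      intro he
      apply hne
      have := congrArg (Equiv.swap z0 t) he
      rwa [Equiv.swap_apply_self, Equiv.swap_apply_right] at this
    · intro π hπ
      simp only [mem_coe, hC, mem_filter, mem_univ, true_and] at hπ ⊢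
      obtain ⟨h1, h2⟩ := hπ
      refine ⟨by rw [Equiv.Perm.mul_apply, hsp]; exact h1, ?_⟩
      intro z hz hne
      rw [Equiv.Perm.mul_apply, Equiv.Perm.mul_apply, Equiv.swap_apply_right]
      refine h2 _ (hsT z hz) ?_
      intro he
      apply hne
      have := congrArg (Equiv.swap z0 t) he
      rwa [Equiv.swap_apply_self, Equiv.swap_apply_left] at this
    · intro π _; dsimp only; rw [mul_assoc, Equiv.swap_mul_self, mul_one]
    · intro π _; dsimp only; rw [mul_assoc, Equiv.swap_mul_self, mul_one]
  have hBcard := card_fiber (by omega) p top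
  rw [hB, Finset.card_biUnion hdisj, Finset.sum_congr rfl hCcard, Finset.sum_const,
    smul_eq_mul, hTcard] at hBcard
  rw [htarget]
  have hnp : 0 < n - (p : ℕ) := by have := p.isLt; omega
  symm
  exact Nat.div_eq_of_eq_mul_left hnp (by rw [Nat.mul_comm]; exact hBcard.symm)
open Finset in
lemma fiber_card {n : ℕ} (hn : 2 ≤ n) (q : Fin n) :
    ((univ : Finset (Equiv.Perm (Fin n))).filter (fun π =>
        ((π (⟨0, by omega⟩ : Fin n) : ℕ) ≠ n - 1 ∧
         ∀ z : Fin n, π.symm ⟨n - 1, by omega⟩ < z → π ⟨0, by omega⟩ < π z) ∧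
        π.symm ⟨n - 1, by omega⟩ = q)).card
      = if (q : ℕ) = 0 then 0 else (n-1).factorial / (n - (q : ℕ)) := by
  classical
  by_cases hq : (q : ℕ) = 0
  · rw [if_pos hq, Finset.card_eq_zero, Finset.filter_eq_empty_iff]
    rintro π - ⟨⟨h0, -⟩, hsym⟩
    apply h0
    have hqz : q = (⟨0, by omega⟩ : Fin n) := Fin.val_injective (by rw [hq])
    rw [hqz] at hsym
    have hπ0 : π (⟨0, by omega⟩ : Fin n) = ⟨n - 1, by omega⟩ := by
      rw [← hsym, Equiv.apply_symm_apply]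
    rw [hπ0]
  · rw [if_neg hq, ← count_main hn q hq]
    congr 1
    ext π
    simp only [Finset.mem_filter, Finset.mem_univ, true_and]
    constructor
    · rintro ⟨⟨h0, hall⟩, hsym⟩
      have hπq : π q = ⟨n - 1, by omega⟩ := by rw [← hsym, Equiv.apply_symm_apply]
      exact ⟨hπq, fun z hz => hall z (by rw [hsym]; exact hz)⟩
    · rintro ⟨hπq, hall⟩
      have hsym : π.symm ⟨n - 1, by omega⟩ = q := by
        rw [← hπq, Equiv.symm_apply_apply]
      refine ⟨⟨?_, fun z hz => hall z (by rw [← hsym]; exact hz)⟩, hsym⟩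
      intro h0
      have he1 : π (⟨0, by omega⟩ : Fin n) = ⟨n - 1, by omega⟩ :=
        Fin.val_injective (h0.trans rfl)
      have he2 : (⟨0, by omega⟩ : Fin n) = q := π.injective (he1.trans hπq.symm)
      exact hq (by rw [← he2])

open Finset in
lemma decomp_card {n : ℕ} (hn : 2 ≤ n) :
    ((univ : Finset (Equiv.Perm (Fin n))).filter (fun π =>
        (π (⟨0, by omega⟩ : Fin n) : ℕ) ≠ n - 1 ∧
        ∀ z : Fin n, π.symm ⟨n - 1, by omega⟩ < z → π ⟨0, by omega⟩ < π z)).card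
      = ∑ i ∈ Finset.Icc 1 (n-1), (n-1).factorial / i := by
  classical
  rw [Finset.card_eq_sum_card_fiberwise
    (f := fun π : Equiv.Perm (Fin n) => π.symm ⟨n - 1, by omega⟩)
    (t := univ) (fun _ _ => Finset.mem_univ _)]
  have hstep : ∀ q : Fin n, (((univ : Finset (Equiv.Perm (Fin n))).filter (fun π =>
        (π (⟨0, by omega⟩ : Fin n) : ℕ) ≠ n - 1 ∧
        ∀ z : Fin n, π.symm ⟨n - 1, by omega⟩ < z → π ⟨0, by omega⟩ < π z)).filter
          (fun π => π.symm ⟨n - 1, by omega⟩ = q)).card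
      = if (q : ℕ) = 0 then 0 else (n-1).factorial / (n - (q : ℕ)) := by
    intro q
    rw [Finset.filter_filter]
    exact fiber_card hn q
  rw [Finset.sum_congr rfl (fun q _ => hstep q)]
  rw [Fin.sum_univ_eq_sum_range (fun k => if k = 0 then 0 else (n-1).factorial / (n - k)) n]
  rw [show Finset.range n = insert 0 (Finset.Icc 1 (n-1)) from by
    ext k; simp only [Finset.mem_range, Finset.mem_insert, Finset.mem_Icc]; omega]
  rw [Finset.sum_insert (by simp)]
  rw [if_pos rfl, zero_add]
  refine Finset.sum_nbij' (fun k => n - k) (fun k => n - k) ?_ ?_ ?_ ?_ ?_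
  · intro a ha; simp only [Finset.mem_Icc] at *; omega
  · intro a ha; simp only [Finset.mem_Icc] at *; omega
  · intro a ha; simp only [Finset.mem_Icc] at *; omega
  · intro a ha; simp only [Finset.mem_Icc] at *; omega
  · intro a ha
    simp only [Finset.mem_Icc] at ha
    rw [if_neg (by omega)]

set_option maxHeartbeats 1000000 in
open Finset in
/-- For `n ≥ 2` and `1 ≤ i ≤ n-1`, the number of permutations
of length `n` with the letter `n` in the `i`-th position from the right that
contain `(12, {(0,0),(0,1),(0,2),(1,2),(2,0),(2,2)})` is `(n-1)!/i`; hence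
the number of avoiders is `n! − Σ_{i=1}^{n-1} (n-1)!/i`. -/
theorem stmt11 (n : ℕ) (hn : 2 ≤ n) :
    (∀ (i : ℕ) (h1 : 1 ≤ i) (h2 : i ≤ n - 1),
      Nat.card {π : Equiv.Perm (Fin n) //
        π ⟨n - i, by omega⟩ = ⟨n - 1, by omega⟩ ∧
        MeshOccursIn (1 : Equiv.Perm (Fin 2)) {(0,0),(0,1),(0,2),(1,2),(2,0),(2,2)} π} =
      (n - 1).factorial / i) ∧
    Nat.card {π : Equiv.Perm (Fin n) //
        MeshAvoids (1 : Equiv.Perm (Fin 2)) {(0,0),(0,1),(0,2),(1,2),(2,0),(2,2)} π} =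
      n.factorial - ∑ i ∈ Finset.Icc 1 (n - 1), (n - 1).factorial / i := by
  classical
  have hn0 : 0 < n := by omega
  constructor
  · intro i h1 h2
    have hiff : ∀ π : Equiv.Perm (Fin n),
        (π ⟨n - i, by omega⟩ = ⟨n - 1, by omega⟩ ∧
          MeshOccursIn (1 : Equiv.Perm (Fin 2)) {(0,0),(0,1),(0,2),(1,2),(2,0),(2,2)} π) ↔
        (π ⟨n - i, by omega⟩ = ⟨n - 1, by omega⟩ ∧
          ∀ z : Fin n, (⟨n - i, by omega⟩ : Fin n) < z → π ⟨0, by omega⟩ < π z) := by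
      intro π
      constructor
      · rintro ⟨hp, hm⟩
        obtain ⟨h0, hall⟩ := (mesh_char hn π).mp hm
        have hsymm : π.symm ⟨n - 1, by omega⟩ = ⟨n - i, by omega⟩ := by
          rw [← hp, Equiv.symm_apply_apply]
        refine ⟨hp, fun z hz => ?_⟩
        apply hall
        rw [hsymm]
        exact hz
      · rintro ⟨hp, hall⟩
        refine ⟨hp, (mesh_char hn π).mpr ⟨?_, ?_⟩⟩
        · intro h0
          have he1 : π (⟨0, by omega⟩ : Fin n) = ⟨n - 1, by omega⟩ :=
            Fin.val_injective (h0.trans rfl)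
          have he2 : (⟨0, by omega⟩ : Fin n) = ⟨n - i, by omega⟩ :=
            π.injective (he1.trans hp.symm)
          have := congrArg Fin.val he2
          simp only at this
          omega
        · have hsymm : π.symm ⟨n - 1, by omega⟩ = ⟨n - i, by omega⟩ := by
            rw [← hp, Equiv.symm_apply_apply]
          intro z hz
          apply hall
          rw [← hsymm]
          exact hz
    rw [Nat.card_congr (Equiv.subtypeEquivRight hiff), Nat.card_eq_fintype_card,
      Fintype.card_subtype]
    have hcm := count_main hn ⟨n - i, by omega⟩ (by simp only; omega)
    rw [hcm]
    congr 1
    show n - (n - i) = i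
    omega
  · have hiff : ∀ π : Equiv.Perm (Fin n),
        MeshAvoids (1 : Equiv.Perm (Fin 2)) {(0,0),(0,1),(0,2),(1,2),(2,0),(2,2)} π ↔
        ¬ ((π (⟨0, by omega⟩ : Fin n) : ℕ) ≠ n - 1 ∧
           ∀ z : Fin n, π.symm ⟨n - 1, by omega⟩ < z → π ⟨0, by omega⟩ < π z) :=
      fun π => not_congr (mesh_char hn π)
    rw [Nat.card_congr (Equiv.subtypeEquivRight hiff), Nat.card_eq_fintype_card,
      Fintype.card_subtype]
    have hsplit := Finset.card_filter_add_card_filter_not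
      (s := (univ : Finset (Equiv.Perm (Fin n))))
      (p := fun π => (π (⟨0, by omega⟩ : Fin n) : ℕ) ≠ n - 1 ∧
           ∀ z : Fin n, π.symm ⟨n - 1, by omega⟩ < z → π ⟨0, by omega⟩ < π z)
    have huniv : (univ : Finset (Equiv.Perm (Fin n))).card = n.factorial := by
      rw [Finset.card_univ, Fintype.card_perm, Fintype.card_fin]
    have hd := decomp_card hn
    omega
end

section
/- Every permutation that contains the classical pattern 12, i.e. the mesh pattern (12, ∅), also contains the mesh pattern (12, {(0,0),(0,1),(1,2),(2,2)}). Hence these two patterns are coincident: a permutation avoids one if and only if it avoids the other, and for every n the unique permutation of length n avoiding (12, {(0,0),(0,1),(1,2),(2,2)}) is the decreasing permutation n(n−1)⋯1, so the number of avoiders of length n is 1. -/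
section Aux
variable {n : ℕ}

lemma occ12_iff (π : Equiv.Perm (Fin n)) :
    MeshOccursIn (1 : Equiv.Perm (Fin 2)) (∅ : Set (ℕ × ℕ)) π ↔
      ∃ i j : Fin n, i < j ∧ π i < π j := by
  constructor
  · rintro ⟨x, hmono, hiso, -⟩
    refine ⟨x 0, x 1, hmono (by decide), (hiso 0 1).2 (by simp)⟩
  · rintro ⟨i, j, hij, hv⟩
    refine ⟨fun a => if a.val = 0 then i else j, ?_, ?_, ?_⟩
    · intro a b hab
      have ha : a.val = 0 ∧ b.val = 1 := by omega
      simp [ha.1, ha.2, hij]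
    · intro a b
      fin_cases a <;> fin_cases b <;>
        simp [hv, hv.le, not_lt_of_gt hv, lt_irrefl]
    · rintro r ⟨⟩

lemma contains_aux (π : Equiv.Perm (Fin n))
    (h : ∃ i j : Fin n, i < j ∧ π i < π j) :
    MeshOccursIn (1 : Equiv.Perm (Fin 2)) {(0,0),(0,1),(1,2),(2,2)} π := by
  classical
  obtain ⟨i, j, hij, hv⟩ := h
  set S : Finset (Fin n) := Finset.univ.filter (fun b => ∃ a, a < b ∧ π a < π b) with hS
  have hjS : j ∈ S := by simp [hS]; exact ⟨i, hij, hv⟩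
  obtain ⟨j0, hj0S, hj0max⟩ := Finset.exists_max_image S π ⟨j, hjS⟩
  obtain ⟨a, haj0, hav⟩ : ∃ a, a < j0 ∧ π a < π j0 := by
    simpa [hS] using hj0S
  set T : Finset (Fin n) := Finset.univ.filter (fun z => z < j0 ∧ π z < π j0) with hT
  have haT : a ∈ T := by simp [hT, haj0, hav]
  set i0 : Fin n := T.min' ⟨a, haT⟩ with hi0def
  have hi0T : i0 ∈ T := T.min'_mem _
  have hi0 : i0 < j0 ∧ π i0 < π j0 := by simpa [hT] using hi0T
  have hi0min : ∀ z, z < j0 → π z < π j0 → i0 ≤ z := by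
    intro z h1 h2
    exact T.min'_le z (by simp [hT, h1, h2])
  set x : Fin 2 → Fin n := fun a => if a.val = 0 then i0 else j0 with hx
  have hx0 : x 0 = i0 := rfl
  have hx1 : x 1 = j0 := rfl
  have hp0 : posOf x 0 = 0 := by simp [posOf]
  have hp1 : posOf x 1 = (i0 : ℕ) + 1 := by simp [posOf, hx]
  have hp2 : posOf x 2 = (j0 : ℕ) + 1 := by simp [posOf, hx]
  have hp3 : posOf x 3 = n + 1 := by simp [posOf]
  have hs : (1 : Equiv.Perm (Fin 2)).symm = 1 := rfl
  have hv0 : valOf 1 x π 0 = 0 := by simp [valOf]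
  have hv1 : valOf 1 x π 1 = (π i0 : ℕ) + 1 := by simp [valOf, hs, hx]
  have hv2 : valOf 1 x π 2 = (π j0 : ℕ) + 1 := by simp [valOf, hs, hx]
  have hv3 : valOf 1 x π 3 = n + 1 := by simp [valOf]
  refine ⟨x, ?_, ?_, ?_⟩
  · intro a b hab
    have ha : a.val = 0 ∧ b.val = 1 := by omega
    have ha' : a = 0 := Fin.ext ha.1
    have hb' : b = 1 := Fin.ext ha.2
    simp [hx, ha', hb', hi0.1]
  · intro a b
    fin_cases a <;> fin_cases b <;>
      simp [hx0, hx1, hx, hi0.2, hi0.2.le, not_lt_of_gt hi0.2, lt_irrefl]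
  · intro r hr z
    rcases hr with rfl | rfl | rfl | rfl
    · rintro ⟨h1, h2, h3, h4⟩
      rw [hp0] at h1; rw [hp1] at h2; rw [hv0] at h3; rw [hv1] at h4
      have hz1 : z < i0 := by exact_mod_cast Nat.lt_of_succ_lt_succ h2
      have hz2 : π z < π i0 := by exact_mod_cast Nat.lt_of_succ_lt_succ h4
      exact absurd (hi0min z (hz1.trans hi0.1) (hz2.trans hi0.2)) (not_le.2 hz1)
    · rintro ⟨h1, h2, h3, h4⟩
      rw [hp0] at h1; rw [hp1] at h2; rw [hv1] at h3; rw [hv2] at h4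
      have hz1 : z < i0 := by exact_mod_cast Nat.lt_of_succ_lt_succ h2
      have hz2 : π z < π j0 := by exact_mod_cast Nat.lt_of_succ_lt_succ h4
      exact absurd (hi0min z (hz1.trans hi0.1) hz2) (not_le.2 hz1)
    · rintro ⟨h1, h2, h3, h4⟩
      rw [hp1] at h1; rw [hp2] at h2; rw [hv2] at h3
      have hz1 : i0 < z := by exact_mod_cast Nat.lt_of_succ_lt_succ h1
      have hz3 : π j0 < π z := by exact_mod_cast Nat.lt_of_succ_lt_succ h3
      have hzS : z ∈ S := by
        simp only [hS, Finset.mem_filter, Finset.mem_univ, true_and]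
        exact ⟨i0, hz1, hi0.2.trans hz3⟩
      exact absurd (hj0max z hzS) (not_le.2 hz3)
    · rintro ⟨h1, h2, h3, h4⟩
      rw [hp2] at h1; rw [hv2] at h3
      have hz1 : j0 < z := by exact_mod_cast Nat.lt_of_succ_lt_succ h1
      have hz3 : π j0 < π z := by exact_mod_cast Nat.lt_of_succ_lt_succ h3
      have hzS : z ∈ S := by
        simp only [hS, Finset.mem_filter, Finset.mem_univ, true_and]
        exact ⟨j0, hz1, hz3⟩
      exact absurd (hj0max z hzS) (not_le.2 hz3)

lemma avoids_iff_dec (π : Equiv.Perm (Fin n)) :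
    (¬ ∃ i j : Fin n, i < j ∧ π i < π j) ↔ ∀ i : Fin n, (π i : ℕ) = n - 1 - (i : ℕ) := by
  constructor
  · intro h
    have hanti : StrictAnti π := by
      intro a b hab
      rcases lt_trichotomy (π a) (π b) with h1 | h1 | h1
      · exact absurd ⟨a, b, hab, h1⟩ h
      · exact absurd (π.injective h1) hab.ne
      · exact h1
    set e : Equiv.Perm (Fin n) := Fin.revPerm.trans π with he
    have hemono : StrictMono e := by
      intro a b hab
      exact hanti (Fin.rev_lt_rev.2 hab)
    have hsymm : StrictMono e.symm := by
      intro a b hab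
      have := (hemono.lt_iff_lt (a := e.symm a) (b := e.symm b))
      simp only [Equiv.apply_symm_apply] at this
      exact this.mp hab
    haveI : WellFoundedLT (Fin n) := inferInstance
    have hid : ∀ i, e i = i := by
      intro i
      have h1 : i ≤ e i := hemono.le_apply
      have h2 : e i ≤ i := by
        have h3 : i ≤ e.symm i := hsymm.le_apply
        have := hemono.monotone h3
        rwa [Equiv.apply_symm_apply] at this
      exact le_antisymm h2 h1
    intro i
    have := hid (Fin.rev i)
    simp only [he, Equiv.trans_apply, Fin.revPerm_apply, Fin.rev_rev] at this
    rw [this, Fin.val_rev]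
    omega
  · intro h
    rintro ⟨i, j, hij, hv⟩
    have h1 := h i
    have h2 := h j
    have hv' : (π i : ℕ) < (π j : ℕ) := hv
    have hij' : (i : ℕ) < (j : ℕ) := hij
    have := j.isLt
    omega

lemma avoidsR_iff (π : Equiv.Perm (Fin n)) :
    MeshAvoids (1 : Equiv.Perm (Fin 2)) {(0,0),(0,1),(1,2),(2,2)} π ↔
      ∀ i : Fin n, (π i : ℕ) = n - 1 - (i : ℕ) := by
  rw [← avoids_iff_dec]
  constructor
  · intro h hc
    exact h (contains_aux π hc)
  · intro h hc
    obtain ⟨x, hmono, hiso, -⟩ := hc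
    exact h ⟨x 0, x 1, hmono (by decide), (hiso 0 1).2 (by simp)⟩

end Aux

/-- Every permutation containing the classical pattern
`(12, ∅)` also contains `(12, {(0,0),(0,1),(1,2),(2,2)})`; hence the two are
coincident, the unique avoider of length `n` is the decreasing permutation
`n(n-1)⋯1`, and the number of avoiders is `1`. -/
theorem stmt15 :
    (∀ (n : ℕ) (π : Equiv.Perm (Fin n)),
      MeshOccursIn (1 : Equiv.Perm (Fin 2)) (∅ : Set (ℕ × ℕ)) π →
        MeshOccursIn (1 : Equiv.Perm (Fin 2)) {(0,0),(0,1),(1,2),(2,2)} π) ∧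
    (∀ (n : ℕ) (π : Equiv.Perm (Fin n)),
      MeshAvoids (1 : Equiv.Perm (Fin 2)) (∅ : Set (ℕ × ℕ)) π ↔
        MeshAvoids (1 : Equiv.Perm (Fin 2)) {(0,0),(0,1),(1,2),(2,2)} π) ∧
    (∀ (n : ℕ) (π : Equiv.Perm (Fin n)),
      MeshAvoids (1 : Equiv.Perm (Fin 2)) {(0,0),(0,1),(1,2),(2,2)} π ↔
        ∀ i : Fin n, (π i : ℕ) = n - 1 - (i : ℕ)) ∧
    ∀ n : ℕ,
      Nat.card {π : Equiv.Perm (Fin n) //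
        MeshAvoids (1 : Equiv.Perm (Fin 2)) {(0,0),(0,1),(1,2),(2,2)} π} = 1 := by
  refine ⟨?_, ?_, ?_, ?_⟩
  · intro n π h
    exact contains_aux π ((occ12_iff π).1 h)
  · intro n π
    constructor
    · intro h hc
      obtain ⟨x, h1, h2, -⟩ := hc
      exact h ⟨x, h1, h2, fun r hr => absurd hr (Set.notMem_empty r)⟩
    · intro h hc
      exact h (contains_aux π ((occ12_iff π).1 hc))
  · intro n π
    exact avoidsR_iff π
  · intro n
    rw [Nat.card_eq_one_iff_unique]
    refine ⟨⟨fun a b => ?_⟩, ⟨⟨Fin.revPerm, (avoidsR_iff _).2 fun i => ?_⟩⟩⟩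
    · obtain ⟨π, hπ⟩ := a
      obtain ⟨σ, hσ⟩ := b
      refine Subtype.ext (Equiv.ext fun i => Fin.val_injective ?_)
      exact ((avoidsR_iff π).1 hπ i).trans (((avoidsR_iff σ).1 hσ i).symm)
    · rw [Fin.revPerm_apply, Fin.val_rev]
      omega
end

section
/- Let a_n be the number of permutations of length n avoiding the mesh pattern (12, {(0,0),(0,2),(1,0),(1,1),(1,2)}). Then a_0 = 1, a_1 = 1, and a_n = n·a_{n−1} − a_{n−2} for all n ≥ 2. -/
open Equiv Finset

/-- The concrete containment condition: an adjacent ascent all of whose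
preceding entries lie strictly between its two values. -/
def Cc {n : ℕ} (π : Equiv.Perm (Fin n)) : Prop :=
  ∃ i j : Fin n, (i : ℕ) + 1 = (j : ℕ) ∧ (π i : ℕ) < (π j : ℕ) ∧
    ∀ z : Fin n, (z : ℕ) < (i : ℕ) → (π i : ℕ) < (π z : ℕ) ∧ (π z : ℕ) < (π j : ℕ)

instance {n : ℕ} : DecidablePred (Cc (n := n)) := fun π => by unfold Cc; infer_instance

lemma occurs_iff {n : ℕ} (π : Equiv.Perm (Fin n)) :
    MeshOccursIn (1 : Equiv.Perm (Fin 2)) {(0,0),(0,2),(1,0),(1,1),(1,2)} π ↔ Cc π := by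
  constructor
  · rintro ⟨x, hmono, hpat, hbox⟩
    have h01 : x 0 < x 1 := hmono (by decide)
    have hπ01 : π (x 0) < π (x 1) := (hpat 0 1).2 (by decide)
    have b00 := hbox (0,0) (by simp)
    have b02 := hbox (0,2) (by simp)
    have b10 := hbox (1,0) (by simp)
    have b11 := hbox (1,1) (by simp)
    have b12 := hbox (1,2) (by simp)
    norm_num [posOf, valOf] at b00 b02 b10 b11 b12
    have hadj : (x 0 : ℕ) + 1 = (x 1 : ℕ) := by
      by_contra h
      have hlt : (x 0 : ℕ) + 1 < (x 1 : ℕ) := by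
        have := (Fin.lt_def).1 h01; omega
      set z : Fin n := ⟨(x 0 : ℕ) + 1, by have := (x 1).isLt; omega⟩ with hz
      have hz0 : x 0 < z := by rw [Fin.lt_def]; simp [hz]
      have hz1 : z < x 1 := by rw [Fin.lt_def]; simp [hz]; omega
      have hπz0 : π z ≠ π (x 0) := fun h =>
        (by omega : ((x 0 : ℕ)) ≠ (x 0 : ℕ) + 1) (congrArg Fin.val (π.injective h)).symm
      have hπz1 : π z ≠ π (x 1) := fun h =>
        (by omega : ((x 1 : ℕ)) ≠ (x 0 : ℕ) + 1) (congrArg Fin.val (π.injective h)).symm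
      have h1 := b10 z hz0 hz1
      have h2 := b12 z hz0 hz1
      have h3 := b11 z hz0 hz1 (lt_of_le_of_ne h1 (Ne.symm hπz0))
      exact hπz1 (le_antisymm h2 h3)
    refine ⟨x 0, x 1, hadj, (Fin.lt_def).1 hπ01, ?_⟩
    intro z hzlt
    have hzf : z < x 0 := (Fin.lt_def).2 hzlt
    have hπz0 : π z ≠ π (x 0) := fun h => (by omega : (z : ℕ) ≠ (x 0 : ℕ))
      (congrArg Fin.val (π.injective h))
    have hπz1 : π z ≠ π (x 1) := fun h => by
      have := congrArg Fin.val (π.injective h)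
      have := (Fin.lt_def).1 h01
      omega
    have h1 : π (x 0) < π z := lt_of_le_of_ne (b00 z hzf) (Ne.symm hπz0)
    have h2 : π z < π (x 1) := lt_of_le_of_ne (b02 z hzf) hπz1
    exact ⟨(Fin.lt_def).1 h1, (Fin.lt_def).1 h2⟩
  · rintro ⟨i, j, hij, hlt, hpre⟩
    have hij' : i < j := (Fin.lt_def).2 (by omega)
    have hπij : π i < π j := (Fin.lt_def).2 hlt
    refine ⟨![i, j], ?_, ?_, ?_⟩
    · intro a b hab
      have ha : a = 0 ∧ b = 1 := by
        have h2a := a.isLt; have h2b := b.isLt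
        have := (Fin.lt_def).1 hab
        constructor <;> (apply Fin.ext; omega)
      rw [ha.1, ha.2]
      simpa using hij'
    · intro a b
      fin_cases a <;> fin_cases b <;>
        simp only [Matrix.cons_val_zero, Matrix.cons_val_one, Matrix.head_cons,
          Fin.mk_zero, Fin.mk_one, Equiv.Perm.coe_one, id_eq] <;>
        first
        | exact iff_of_true hπij (by decide)
        | exact iff_of_false (lt_irrefl _) (by decide)
        | exact iff_of_false (fun h => absurd (lt_trans h hπij) (lt_irrefl _)) (by decide)
    · rintro r hr
      simp only [Set.mem_insert_iff, Set.mem_singleton_iff] at hr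
      rcases hr with rfl | rfl | rfl | rfl | rfl <;>
        norm_num [posOf, valOf]
      · intro z hz
        have := (hpre z ((Fin.lt_def).1 hz)).1
        rw [Fin.le_def]; simp only [Equiv.Perm.one_symm, Equiv.Perm.coe_one, id_eq, Matrix.cons_val_zero, Matrix.cons_val_one, Matrix.head_cons]; omega
      · intro z hz
        have := (hpre z ((Fin.lt_def).1 hz)).2
        rw [Fin.le_def]; simp only [Equiv.Perm.one_symm, Equiv.Perm.coe_one, id_eq, Matrix.cons_val_zero, Matrix.cons_val_one, Matrix.head_cons]; omega
      · intro z hz1 hz2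
        have a1 := (Fin.lt_def).1 hz1
        have a2 := (Fin.lt_def).1 hz2
        omega
      · intro z hz1 hz2
        have a1 := (Fin.lt_def).1 hz1
        have a2 := (Fin.lt_def).1 hz2
        omega
      · intro z hz1 hz2
        have a1 := (Fin.lt_def).1 hz1
        have a2 := (Fin.lt_def).1 hz2
        omega

/-- Insertion of the value `p` at the last position of a permutation. -/
noncomputable def ins {n : ℕ} (p : Fin (n + 1)) (σ : Equiv.Perm (Fin n)) :
    Equiv.Perm (Fin (n + 1)) :=
  Equiv.ofBijective (fun i => Fin.lastCases p (fun j => p.succAbove (σ j)) i) (by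
    constructor
    · intro a b h
      induction a using Fin.lastCases with
      | last =>
        induction b using Fin.lastCases with
        | last => rfl
        | cast b =>
          simp only [Fin.lastCases_last, Fin.lastCases_castSucc] at h
          exact absurd h.symm (Fin.succAbove_ne p (σ b))
      | cast a =>
        induction b using Fin.lastCases with
        | last =>
          simp only [Fin.lastCases_last, Fin.lastCases_castSucc] at h
          exact absurd h (Fin.succAbove_ne p (σ a))
        | cast b =>
          simp only [Fin.lastCases_castSucc] at h
          have := σ.injective (Fin.succAbove_right_injective h)
          exact congrArg Fin.castSucc this
    · intro v
      by_cases h : v = p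
      · exact ⟨Fin.last n, by simp [h]⟩
      · obtain ⟨w, hw⟩ := Fin.exists_succAbove_eq h
        exact ⟨(σ.symm w).castSucc, by simp [hw]⟩)

@[simp] lemma ins_last {n : ℕ} (p : Fin (n + 1)) (σ : Equiv.Perm (Fin n)) :
    ins p σ (Fin.last n) = p := by simp [ins, Equiv.ofBijective]

@[simp] lemma ins_castSucc {n : ℕ} (p : Fin (n + 1)) (σ : Equiv.Perm (Fin n)) (i : Fin n) :
    ins p σ i.castSucc = p.succAbove (σ i) := by simp [ins, Equiv.ofBijective]

lemma succAbove_coe {n : ℕ} (p : Fin (n + 1)) (v : Fin n) :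
    (p.succAbove v : ℕ) = if (v : ℕ) < (p : ℕ) then (v : ℕ) else (v : ℕ) + 1 := by
  rw [Fin.succAbove]
  split_ifs with h1 h2 h2
  · simp
  · exact absurd (by simpa [Fin.lt_def] using h1) h2
  · exact absurd (by simpa [Fin.lt_def] using h2) h1
  · simp

lemma succAbove_lt_coe {n : ℕ} (p : Fin (n + 1)) (a b : Fin n) :
    (p.succAbove a : ℕ) < (p.succAbove b : ℕ) ↔ (a : ℕ) < (b : ℕ) := by
  rw [succAbove_coe, succAbove_coe]; split_ifs <;> omega

lemma Cc_ins {m : ℕ} (p : Fin (m + 2)) (σ : Equiv.Perm (Fin (m + 1))) :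
    Cc (ins p σ) ↔ Cc σ ∨ ((p : ℕ) = m + 1 ∧ (σ (Fin.last m) : ℕ) = 0) := by
  constructor
  · rintro ⟨I, J, hIJ, hlt, hpre⟩
    by_cases hJ : (J : ℕ) = m + 1
    · have hJl : J = Fin.last (m + 1) := Fin.ext (by simpa using hJ)
      have hIl : I = (Fin.last m).castSucc := Fin.ext (by simp; omega)
      subst hJl; subst hIl
      rw [ins_last] at hlt hpre
      rw [ins_castSucc] at hlt hpre
      have key : ∀ w : Fin (m + 1), (p.succAbove (σ w) : ℕ) < (p : ℕ) := by
        intro w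
        rcases eq_or_ne w (Fin.last m) with rfl | hw
        · exact hlt
        · have hwm : (w : ℕ) < m := by
            have := w.isLt
            have : (w : ℕ) ≠ m := fun h => hw (Fin.ext (by simp [h]))
            omega
          have := hpre w.castSucc (by simpa using hwm)
          rw [ins_castSucc] at this
          exact this.2
      have hp : (p : ℕ) = m + 1 := by
        by_contra h
        have hne : Fin.last (m + 1) ≠ p := fun he => h (by simp [← he])
        obtain ⟨w, hw⟩ := Fin.exists_succAbove_eq hne
        have := key (σ.symm w)
        rw [Equiv.apply_symm_apply, hw] at this
        simp at this
        omega
      refine Or.inr ⟨hp, ?_⟩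
      by_contra h0
      have hu : σ (σ.symm 0) = 0 := σ.apply_symm_apply 0
      have hune : σ.symm 0 ≠ Fin.last m := by
        intro he; rw [he] at hu; exact h0 (by simp [hu])
      have hum : ((σ.symm 0 : Fin (m+1)) : ℕ) < m := by
        have := (σ.symm 0).isLt
        have : ((σ.symm 0 : Fin (m+1)) : ℕ) ≠ m := fun h => hune (Fin.ext (by simp [h]))
        omega
      have := (hpre (σ.symm 0).castSucc (by simpa using hum)).1
      rw [ins_castSucc, hu] at this
      rw [succAbove_coe, succAbove_coe] at this
      simp at this
      split_ifs at this <;> omega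
    · have hJm : (J : ℕ) < m + 1 := by have := J.isLt; omega
      have hIm : (I : ℕ) < m + 1 := by omega
      set j' : Fin (m + 1) := ⟨(J : ℕ), hJm⟩ with hj'
      set i' : Fin (m + 1) := ⟨(I : ℕ), hIm⟩ with hi'
      have hJc : j'.castSucc = J := Fin.ext rfl
      have hIc : i'.castSucc = I := Fin.ext rfl
      rw [← hJc, ← hIc, ins_castSucc, ins_castSucc] at hlt
      refine Or.inl ⟨i', j', hIJ, (succAbove_lt_coe p _ _).1 hlt, ?_⟩
      intro z hz
      have h2 := hpre z.castSucc ((Fin.lt_def).1 hz)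
      rw [← hIc, ← hJc, ins_castSucc, ins_castSucc, ins_castSucc] at h2
      exact ⟨(succAbove_lt_coe p _ _).1 h2.1, (succAbove_lt_coe p _ _).1 h2.2⟩
  · rintro (⟨i, j, hij, hlt, hpre⟩ | ⟨hp, h0⟩)
    · refine ⟨i.castSucc, j.castSucc, by simpa using hij, ?_, ?_⟩
      · rw [ins_castSucc, ins_castSucc]
        exact (succAbove_lt_coe p _ _).2 hlt
      · intro z hz
        have hzm : (z : ℕ) < m + 1 := by have := i.isLt; simp at hz; omega
        have hzc : (⟨(z : ℕ), hzm⟩ : Fin (m+1)).castSucc = z := Fin.ext rfl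
        rw [← hzc, ins_castSucc, ins_castSucc, ins_castSucc]
        have := hpre ⟨(z : ℕ), hzm⟩ (by simpa using hz)
        exact ⟨(succAbove_lt_coe p _ _).2 this.1, (succAbove_lt_coe p _ _).2 this.2⟩
    · refine ⟨(Fin.last m).castSucc, Fin.last (m + 1), by simp, ?_, ?_⟩
      · rw [ins_castSucc, ins_last, succAbove_coe, h0, hp]
        simp
      · intro z hz
        simp at hz
        have hzm : (z : ℕ) < m + 1 := by omega
        have hzc : (⟨(z : ℕ), hzm⟩ : Fin (m+1)).castSucc = z := Fin.ext rfl
        set w : Fin (m + 1) := ⟨(z : ℕ), hzm⟩ with hw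
        have hwne : σ w ≠ σ (Fin.last m) := by
          intro he
          have := σ.injective he
          rw [hw] at this
          have : (z : ℕ) = m := by simpa using congrArg Fin.val this
          omega
        have hσw : 0 < (σ w : ℕ) := by
          rcases Nat.eq_zero_or_pos (σ w : ℕ) with h | h
          · exact absurd (Fin.ext (by rw [h, h0])) hwne
          · exact h
        rw [← hzc, ins_castSucc, ins_castSucc, ins_last, succAbove_coe, succAbove_coe, h0]
        have := (σ w).isLt
        simp
        rw [if_pos (show (0 : Fin (m + 2)) < p from (Fin.lt_def).2 (by rw [Fin.val_zero]; omega))]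
        constructor
        · split_ifs <;> omega
        · split_ifs <;> omega

lemma ins_bij {n : ℕ} :
    Function.Bijective (fun x : Fin (n + 1) × Equiv.Perm (Fin n) => ins x.1 x.2) := by
  rw [Fintype.bijective_iff_injective_and_card]
  constructor
  · rintro ⟨p, σ⟩ ⟨q, τ⟩ h
    simp only at h
    have hpq : p = q := by rw [← ins_last p σ, ← ins_last q τ, h]
    have : σ = τ := by
      ext i
      have := congrFun (congrArg (fun (e : Equiv.Perm (Fin (n+1))) =>
        (e : Fin (n+1) → Fin (n+1))) h) i.castSucc
      simp only [ins_castSucc] at this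
      rw [hpq] at this
      exact congrArg Fin.val (Fin.succAbove_right_injective this)
    simp [hpq, this]
  · simp [Fintype.card_perm, Nat.factorial_succ]

/-- The set of avoiders of length `n`. -/
def Av (n : ℕ) : Finset (Equiv.Perm (Fin n)) := univ.filter (fun π => ¬ Cc π)

/-- The set of avoiders of length `m+1` whose last entry is the minimum. -/
def Mv (m : ℕ) : Finset (Equiv.Perm (Fin (m + 1))) :=
  univ.filter (fun σ => ¬ Cc σ ∧ (σ (Fin.last m) : ℕ) = 0)

lemma card_pairs {n : ℕ} (Q : Equiv.Perm (Fin (n + 1)) → Prop) [DecidablePred Q] :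
    (univ.filter (fun x : Fin (n + 1) × Equiv.Perm (Fin n) => Q (ins x.1 x.2))).card
      = (univ.filter Q).card := by
  apply Finset.card_bij (fun x _ => ins x.1 x.2)
  · intro x hx
    simp only [mem_filter, mem_univ, true_and] at hx ⊢
    exact hx
  · intro x hx y hy h
    exact ins_bij.injective h
  · intro σ hσ
    obtain ⟨x, hx⟩ := ins_bij.surjective σ
    refine ⟨x, ?_, hx⟩
    have hx' : ins x.1 x.2 = σ := hx
    simp only [mem_filter, mem_univ, true_and] at hσ ⊢
    rw [hx']; exact hσ

lemma count1 (m : ℕ) : (Av (m + 2)).card + (Mv m).card = (m + 2) * (Av (m + 1)).card := by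
  have h1 := card_pairs (n := m + 1) (fun σ => ¬ Cc σ)
  have h2 : (univ.filter (fun x : Fin (m + 2) × Equiv.Perm (Fin (m + 1)) => ¬ Cc (ins x.1 x.2)))
      = univ.filter (fun x : Fin (m + 2) × Equiv.Perm (Fin (m + 1)) =>
          ¬ Cc x.2 ∧ ¬ ((x.1 : ℕ) = m + 1 ∧ (x.2 (Fin.last m) : ℕ) = 0)) := by
    apply filter_congr
    intro x _
    simp only [Cc_ins, not_or, eq_iff_iff]
  have h3 := Finset.card_filter_add_card_filter_not
    (s := univ.filter (fun x : Fin (m + 2) × Equiv.Perm (Fin (m + 1)) => ¬ Cc x.2))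
    (p := fun x => (x.1 : ℕ) = m + 1 ∧ (x.2 (Fin.last m) : ℕ) = 0)
  rw [Finset.filter_filter, Finset.filter_filter] at h3
  have h4 : (univ.filter (fun x : Fin (m + 2) × Equiv.Perm (Fin (m + 1)) => ¬ Cc x.2)).card
      = (m + 2) * (Av (m + 1)).card := by
    have : (univ.filter (fun x : Fin (m + 2) × Equiv.Perm (Fin (m + 1)) => ¬ Cc x.2))
        = univ ×ˢ Av (m + 1) := by
      ext x; simp [Av, Finset.mem_product]
    rw [this, Finset.card_product, Av]
    simp
  have h5 : (univ.filter (fun x : Fin (m + 2) × Equiv.Perm (Fin (m + 1)) =>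
      ¬ Cc x.2 ∧ ((x.1 : ℕ) = m + 1 ∧ (x.2 (Fin.last m) : ℕ) = 0))).card = (Mv m).card := by
    have : (univ.filter (fun x : Fin (m + 2) × Equiv.Perm (Fin (m + 1)) =>
        ¬ Cc x.2 ∧ ((x.1 : ℕ) = m + 1 ∧ (x.2 (Fin.last m) : ℕ) = 0)))
        = {Fin.last (m + 1)} ×ˢ Mv m := by
      ext ⟨p, σ⟩
      simp only [mem_filter, mem_univ, true_and, Finset.mem_product, Finset.mem_singleton, Mv,
        Fin.ext_iff, Fin.val_last]
      tauto
    rw [this, Finset.card_product]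
    simp
  rw [h2] at h1
  rw [h4] at h3
  rw [h5] at h3
  have h6 : (univ.filter (fun π : Equiv.Perm (Fin (m+2)) => ¬ Cc π)).card
      = (Av (m + 2)).card := rfl
  rw [h6] at h1
  omega

lemma count2 (m : ℕ) : (Mv (m + 1)).card = (Av (m + 1)).card := by
  have h1 := card_pairs (n := m + 1)
    (fun σ => ¬ Cc σ ∧ (σ (Fin.last (m + 1)) : ℕ) = 0)
  have h2 : (univ.filter (fun x : Fin (m + 2) × Equiv.Perm (Fin (m + 1)) =>
      ¬ Cc (ins x.1 x.2) ∧ ((ins x.1 x.2) (Fin.last (m + 1)) : ℕ) = 0))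
      = univ.filter (fun x : Fin (m + 2) × Equiv.Perm (Fin (m + 1)) =>
          ¬ Cc x.2 ∧ (x.1 : ℕ) = 0) := by
    apply filter_congr
    intro x _
    simp only [Cc_ins, ins_last, not_or, eq_iff_iff]
    constructor
    · rintro ⟨⟨hc, _⟩, hp⟩
      exact ⟨hc, hp⟩
    · rintro ⟨hc, hp⟩
      exact ⟨⟨hc, fun h => by omega⟩, hp⟩
  rw [h2] at h1
  have h3 : (univ.filter (fun x : Fin (m + 2) × Equiv.Perm (Fin (m + 1)) =>
      ¬ Cc x.2 ∧ (x.1 : ℕ) = 0)) = {(0 : Fin (m + 2))} ×ˢ Av (m + 1) := by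
    ext ⟨p, σ⟩
    simp only [mem_filter, mem_univ, true_and, Finset.mem_product, Finset.mem_singleton, Av,
      Fin.ext_iff, Fin.val_zero]
    tauto
  rw [h3, Finset.card_product] at h1
  simp only [Finset.card_singleton, one_mul] at h1
  unfold Mv
  exact h1.symm

lemma Cc_small {n : ℕ} (h : n ≤ 1) (π : Equiv.Perm (Fin n)) : ¬ Cc π := by
  rintro ⟨i, j, hij, -, -⟩
  have := i.isLt; have := j.isLt; omega

lemma Av_small {n : ℕ} (h : n ≤ 1) : (Av n).card = 1 := by
  rw [Av, Finset.filter_true_of_mem (fun π _ => Cc_small h π), Finset.card_univ,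
    Fintype.card_perm]
  interval_cases n <;> rfl

lemma count2' (m : ℕ) : (Mv m).card = (Av m).card := by
  cases m with
  | zero =>
    have h1 : Mv 0 = univ := by
      rw [Mv, Finset.filter_true_of_mem]
      intro σ _
      refine ⟨Cc_small le_rfl σ, ?_⟩
      have := (σ (Fin.last 0)).isLt
      omega
    rw [h1, Finset.card_univ, Av_small (by norm_num)]
    simp [Fintype.card_perm]
  | succ m => exact count2 m

/-- The number `a n` of permutations of length `n` avoiding
`(12, {(0,0),(0,2),(1,0),(1,1),(1,2)})` satisfies `a 0 = a 1 = 1` and `a n = n·a (n-1) − a (n-2)` for `n ≥ 2`. -/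
theorem stmt17 (a : ℕ → ℕ)
    (ha : ∀ n, a n = Nat.card {π : Equiv.Perm (Fin n) //
      MeshAvoids (1 : Equiv.Perm (Fin 2)) {(0,0),(0,2),(1,0),(1,1),(1,2)} π}) :
    a 0 = 1 ∧ a 1 = 1 ∧ ∀ n, 2 ≤ n → a n = n * a (n - 1) - a (n - 2) := by
  have hA : ∀ n, a n = (Av n).card := by
    intro n
    rw [ha n]
    have he : Nat.card {π : Equiv.Perm (Fin n) //
        MeshAvoids (1 : Equiv.Perm (Fin 2)) {(0,0),(0,2),(1,0),(1,1),(1,2)} π}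
        = Nat.card {π : Equiv.Perm (Fin n) // ¬ Cc π} :=
      Nat.card_congr (Equiv.subtypeEquivRight
        (p := fun π : Equiv.Perm (Fin n) =>
          MeshAvoids (1 : Equiv.Perm (Fin 2)) {(0,0),(0,2),(1,0),(1,1),(1,2)} π)
        (q := fun π => ¬ Cc π)
        (fun π => not_congr (occurs_iff π)))
    rw [he, Nat.card_eq_fintype_card, Fintype.card_subtype]
    rfl
  refine ⟨by rw [hA 0]; exact Av_small (by norm_num),
    by rw [hA 1]; exact Av_small (by norm_num), ?_⟩
  intro n hn
  obtain ⟨m, rfl⟩ : ∃ m, n = m + 2 := ⟨n - 2, by omega⟩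
  have e1 : m + 2 - 1 = m + 1 := by omega
  have e2 : m + 2 - 2 = m := by omega
  rw [e1, e2, hA, hA, hA]
  have c1 := count1 m
  have c2 := count2' m
  omega
end
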